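/- arXiv:0810.1632 — 4 statements merged into one kernel-verified Lean document; each statement's English description precedes it below -/
import Mathlib

section
/- Assume Properties P3 and P8 hold (b² = e and N ∩ bNb⁻¹ = {e}). Then for any k ∈ N, if kbk⁻¹b⁻¹ ∈ A then k = e. -/
theorem stmt2 (S : Type*) [Group S] [Finite S] (p : ℕ) (hp : p.Prime) (hp2 : 2 < p)
    (a b : S)
    (hP3 : b ^ 2 = 1)
    (hP8 : Subgroup.normalizer (Subgroup.zpowers a : Set S) ⊓
      Subgroup.map (MulAut.conj b).toMonoidHom (Subgroup.normalizer (Subgroup.zpowers a : Set S)) = ⊥) :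
    ∀ k ∈ Subgroup.normalizer (Subgroup.zpowers a : Set S),
      k * b * k⁻¹ * b⁻¹ ∈ Subgroup.zpowers a → k = 1 := by
  intro k hk hc
  have hbb : b * b = 1 := by rw [← sq]; exact hP3
  have hb : b⁻¹ = b := inv_eq_of_mul_eq_one_right hbb
  have hcN : k * b * k⁻¹ * b⁻¹ ∈ Subgroup.normalizer (Subgroup.zpowers a : Set S) :=
    Subgroup.le_normalizer hc
  have hn : b⁻¹ * k * b ∈ Subgroup.normalizer (Subgroup.zpowers a : Set S) := by
    have h2 : b⁻¹ * k * b = (k * b * k⁻¹ * b⁻¹)⁻¹ * k := by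
      have h3 : (k * b * k⁻¹ * b⁻¹)⁻¹ * k = b * k * b⁻¹ := by group
      rw [h3, hb]
    rw [h2]
    exact Subgroup.mul_mem _ (Subgroup.inv_mem _ hcN) hk
  have hmem : k ∈ Subgroup.map (MulAut.conj b).toMonoidHom (Subgroup.normalizer (Subgroup.zpowers a : Set S)) :=
    Subgroup.mem_map.mpr ⟨b⁻¹ * k * b, hn, by simp [MulAut.conj_apply]; group⟩
  have : k ∈ (⊥ : Subgroup S) := hP8 ▸ Subgroup.mem_inf.mpr ⟨hk, hmem⟩
  exact Subgroup.mem_bot.mp this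
end

section
/- If g and h are conjugate cyclically reduced elements of G = G₁ *_H G₂, then l(g) = l(h). -/
universe u

def IsAmalgamIn {G : Type u} [Group G] (G₁ G₂ H T : Subgroup G) : Prop :=
  G₁ ⊓ G₂ = H ∧ G₁ ⊔ G₂ = T ∧
  ∀ (Q : Type u) [Group Q], ∀ (f₁ : ↥G₁ →* Q) (f₂ : ↥G₂ →* Q),
    (∀ (x : G) (hx₁ : x ∈ G₁) (hx₂ : x ∈ G₂), f₁ ⟨x, hx₁⟩ = f₂ ⟨x, hx₂⟩) →
    ∃! f : ↥T →* Q,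
      (∀ (x : G) (hx : x ∈ G₁) (hxT : x ∈ T), f ⟨x, hxT⟩ = f₁ ⟨x, hx⟩) ∧
      (∀ (x : G) (hx : x ∈ G₂) (hxT : x ∈ T), f ⟨x, hxT⟩ = f₂ ⟨x, hx⟩)

/-- `w` is a list of elements lying alternately in `G₁ ∖ H` and `G₂ ∖ H`. -/
def ReducedWord {G : Type u} [Group G] (G₁ G₂ H : Subgroup G) (w : List G) : Prop :=
  (∀ x ∈ w, (x ∈ G₁ ∨ x ∈ G₂) ∧ x ∉ H) ∧
  List.Chain' (fun x y => ¬(x ∈ G₁ ∧ y ∈ G₁) ∧ ¬(x ∈ G₂ ∧ y ∈ G₂)) w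

namespace Stmt4Aux

variable {G : Type u} [Group G]

/-- `P G₁ G₂ H x n` : `x` has a reduced decomposition of length at most `n`. -/
def P (G₁ G₂ H : Subgroup G) (x : G) (n : ℕ) : Prop :=
  ∃ a ∈ H, ∃ w : List G, ReducedWord G₁ G₂ H w ∧ x = a * w.prod ∧ w.length ≤ n

variable {G₁ G₂ H : Subgroup G}

theorem reduced_symm {w : List G} (hw : ReducedWord G₁ G₂ H w) :
    ReducedWord G₂ G₁ H w := by
  obtain ⟨h1, h2⟩ := hw
  exact ⟨fun x hx => ⟨(h1 x hx).1.symm, (h1 x hx).2⟩,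
    h2.imp fun a b hab => ⟨hab.2, hab.1⟩⟩

theorem P_symm {x : G} {n : ℕ} (hx : P G₁ G₂ H x n) : P G₂ G₁ H x n := by
  obtain ⟨a, ha, w, hw, hx, hl⟩ := hx
  exact ⟨a, ha, w, reduced_symm hw, hx, hl⟩

theorem P_mono {x : G} {n m : ℕ} (hnm : n ≤ m) (hx : P G₁ G₂ H x n) : P G₁ G₂ H x m := by
  obtain ⟨a, ha, w, hw, hx, hl⟩ := hx
  exact ⟨a, ha, w, hw, hx, hl.trans hnm⟩

theorem P_one : P G₁ G₂ H 1 0 :=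
  ⟨1, one_mem _, [], ⟨by simp, List.isChain_nil⟩, by simp, le_refl _⟩

theorem P_H_mul {a x : G} {n : ℕ} (ha : a ∈ H) (hx : P G₁ G₂ H x n) :
    P G₁ G₂ H (a * x) n := by
  obtain ⟨b, hb, w, hw, rfl, hl⟩ := hx
  exact ⟨a * b, mul_mem ha hb, w, hw, by rw [mul_assoc], hl⟩

theorem prepend_left (hinf : G₁ ⊓ G₂ = H) {s x : G} (hs : s ∈ G₁) {n : ℕ}
    (hx : P G₁ G₂ H x n) : P G₁ G₂ H (s * x) (n + 1) := by
  have h₁ : H ≤ G₁ := hinf ▸ inf_le_left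
  have h₂ : H ≤ G₂ := hinf ▸ inf_le_right
  have hmemH : ∀ z : G, z ∈ G₁ → z ∈ G₂ → z ∈ H := fun z hz1 hz2 => hinf ▸ ⟨hz1, hz2⟩
  obtain ⟨a, ha, w, ⟨hmem, hchain⟩, rfl, hl⟩ := hx
  have hta : s * a ∈ G₁ := mul_mem hs (h₁ ha)
  rw [← mul_assoc]
  match w, hmem, hchain, hl with
  | [], _, _, _ =>
    by_cases ht : s * a ∈ H
    · exact ⟨s * a, ht, [], ⟨by simp, List.isChain_nil⟩, by simp, by simp⟩
    · exact ⟨1, one_mem _, [s * a], ⟨by simpa using ⟨Or.inl hta, ht⟩, List.isChain_singleton _⟩,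
        by simp, by simp⟩
  | y :: rest, hmem, hchain, hl =>
    by_cases hy : y ∈ G₁
    · have hz : s * a * y ∈ G₁ := mul_mem hta hy
      have heq : s * a * ((y :: rest).prod) = (s * a * y) * rest.prod := by
        simp [List.prod_cons, mul_assoc]
      by_cases hzH : s * a * y ∈ H
      · refine ⟨s * a * y, hzH, rest, ⟨fun t ht => hmem t (List.mem_cons_of_mem _ ht),
          hchain.tail⟩, heq, by simp at hl; omega⟩
      · refine ⟨1, one_mem _, (s * a * y) :: rest,
          ⟨?_, ?_⟩, by simpa using heq, by simpa using hl.trans (Nat.le_succ _)⟩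
        · intro t ht
          rcases List.mem_cons.1 ht with rfl | ht
          · exact ⟨Or.inl hz, hzH⟩
          · exact hmem t (List.mem_cons_of_mem _ ht)
        · rw [List.Chain', List.isChain_cons]
          refine ⟨?_, hchain.tail⟩
          intro r hr
          have hyr := (List.isChain_cons.1 hchain).1 r hr
          refine ⟨fun hc => hyr.1 ⟨hy, hc.2⟩, fun hc => hzH (hmemH _ hz hc.1)⟩
    · -- y ∈ G₂
      have hy2 : y ∈ G₂ := ((hmem y List.mem_cons_self).1).resolve_left hy
      by_cases ht : s * a ∈ H
      · exact ⟨s * a, ht, y :: rest, ⟨hmem, hchain⟩, rfl, hl.trans (Nat.le_succ _)⟩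
      · refine ⟨1, one_mem _, (s * a) :: y :: rest, ⟨?_, ?_⟩, by simp, by simpa using hl⟩
        · intro t htl
          rcases List.mem_cons.1 htl with rfl | htl
          · exact ⟨Or.inl hta, ht⟩
          · exact hmem t htl
        · rw [List.Chain', List.isChain_cons_cons]
          exact ⟨⟨fun hc => hy hc.2, fun hc => ht (hmemH _ hta hc.1)⟩, hchain⟩

theorem prepend (hinf : G₁ ⊓ G₂ = H) {s x : G} (hs : s ∈ G₁ ∨ s ∈ G₂) {n : ℕ}
    (hx : P G₁ G₂ H x n) : P G₁ G₂ H (s * x) (n + 1) := by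
  rcases hs with hs | hs
  · exact prepend_left hinf hs hx
  · exact P_symm (prepend_left (by rw [inf_comm]; exact hinf) hs (P_symm hx))

theorem prod_prepend (hinf : G₁ ⊓ G₂ = H) {L : List G}
    (hL : ∀ x ∈ L, x ∈ G₁ ∨ x ∈ G₂) {y : G} {n : ℕ} (hy : P G₁ G₂ H y n) :
    P G₁ G₂ H (L.prod * y) (L.length + n) := by
  induction L with
  | nil => simpa using hy
  | cons t L ih =>
    have := prepend hinf (hL t List.mem_cons_self)
      (ih fun x hx => hL x (List.mem_cons_of_mem _ hx))
    rw [List.prod_cons, mul_assoc]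
    refine P_mono ?_ this
    simp

theorem P_mul (hinf : G₁ ⊓ G₂ = H) {x y : G} {n m : ℕ}
    (hx : P G₁ G₂ H x n) (hy : P G₁ G₂ H y m) : P G₁ G₂ H (x * y) (n + m) := by
  obtain ⟨a, ha, w, hw, rfl, hl⟩ := hx
  rw [mul_assoc]
  refine P_H_mul ha (P_mono ?_ (prod_prepend hinf (fun t ht => (hw.1 t ht).1) hy))
  omega

theorem P_inv (hinf : G₁ ⊓ G₂ = H) {x : G} {n : ℕ} (hx : P G₁ G₂ H x n) :
    P G₁ G₂ H x⁻¹ n := by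
  have h₁ : H ≤ G₁ := hinf ▸ inf_le_left
  obtain ⟨a, ha, w, hw, rfl, hl⟩ := hx
  have : (a * w.prod)⁻¹ = ((w.map fun t => t⁻¹).reverse).prod * a⁻¹ := by
    rw [mul_inv_rev, List.prod_inv_reverse]
  rw [this]
  have hmem : ∀ t ∈ (w.map fun t => t⁻¹).reverse, t ∈ G₁ ∨ t ∈ G₂ := by
    intro t ht
    rw [List.mem_reverse, List.mem_map] at ht
    obtain ⟨u, hu, rfl⟩ := ht
    rcases (hw.1 u hu).1 with h | h
    · exact Or.inl (inv_mem h)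
    · exact Or.inr (inv_mem h)
  have := prod_prepend hinf hmem (y := a⁻¹) (n := 0)
    ⟨a⁻¹, inv_mem ha, [], ⟨by simp, List.isChain_nil⟩, by simp, le_refl _⟩
  refine P_mono ?_ this
  simpa using hl

theorem P_exists (hinf : G₁ ⊓ G₂ = H) (hsup : G₁ ⊔ G₂ = ⊤) (x : G) :
    ∃ n, P G₁ G₂ H x n := by
  have hx : x ∈ Subgroup.closure ((G₁ : Set G) ∪ (G₂ : Set G)) := by
    rw [← Subgroup.sup_eq_closure, hsup]; trivial
  refine Subgroup.closure_induction (fun t ht => ?_) ⟨0, P_one⟩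
    (fun t u _ _ ⟨n, hn⟩ ⟨m, hm⟩ => ⟨n + m, P_mul hinf hn hm⟩)
    (fun t _ ⟨n, hn⟩ => ⟨n, P_inv hinf hn⟩) hx
  refine ⟨1, ?_⟩
  have : t ∈ G₁ ∨ t ∈ G₂ := by simpa using ht
  have := prepend hinf this P_one
  simpa using this

theorem mul_H_mem_iff₁ (hinf : G₁ ⊓ G₂ = H) {g₀ : G} (hg₀ : g₀ ∈ H) (x : G) :
    x * g₀ ∈ G₁ ↔ x ∈ G₁ :=
  mul_mem_cancel_right ((hinf ▸ inf_le_left : H ≤ G₁) hg₀)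

theorem mul_H_mem_iff₂ (hinf : G₁ ⊓ G₂ = H) {g₀ : G} (hg₀ : g₀ ∈ H) (x : G) :
    x * g₀ ∈ G₂ ↔ x ∈ G₂ :=
  mul_mem_cancel_right ((hinf ▸ inf_le_right : H ≤ G₂) hg₀)

theorem pow_dec (hinf : G₁ ⊓ G₂ = H) {g g₀ : G} {wg : List G} (hg₀ : g₀ ∈ H)
    (hwg : ReducedWord G₁ G₂ H wg) (hgdec : g = g₀ * wg.prod) (hglen : 2 ≤ wg.length)
    (hgcyc : ∀ x y : G, wg.head? = some x → wg.getLast? = some y →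
      ¬(x ∈ G₁ ∧ y ∈ G₁) ∧ ¬(x ∈ G₂ ∧ y ∈ G₂)) :
    ∀ m : ℕ, ∃ u : List G, ReducedWord G₁ G₂ H u ∧ u.length = (m + 1) * wg.length ∧
      g ^ (m + 1) = g₀ * u.prod ∧ u.getLast? = wg.getLast? := by
  intro m
  induction m with
  | zero => exact ⟨wg, hwg, (one_mul _).symm, by rw [pow_one, hgdec], rfl⟩
  | succ m ih =>
    obtain ⟨u, hu, hulen, hupow, hulast⟩ := ih
    have hne_wg : wg ≠ [] := by rintro rfl; simp at hglen
    have hne_u : u ≠ [] := by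
      rintro rfl
      simp only [List.length_nil] at hulen
      rcases Nat.mul_eq_zero.1 hulen.symm with h | h <;> omega
    set e := u.getLast hne_u with he
    set L := u.dropLast with hL
    have hsplit : L ++ [e] = u := List.dropLast_append_getLast hne_u
    have hew : e = wg.getLast hne_wg := by
      have h1 : u.getLast? = some e := List.getLast?_eq_getLast hne_u
      have h2 : wg.getLast? = some (wg.getLast hne_wg) := List.getLast?_eq_getLast hne_wg
      rw [h1, h2] at hulast
      exact Option.some.inj hulast
    have heu : e ∈ u := List.getLast_mem hne_u
    have hefac : e ∈ G₁ ∨ e ∈ G₂ := (hu.1 e heu).1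
    have heH : e ∉ H := (hu.1 e heu).2
    refine ⟨L ++ (e * g₀) :: wg, ⟨?_, ?_⟩, ?_, ?_, ?_⟩
    · intro t ht
      rcases List.mem_append.1 ht with ht | ht
      · exact hu.1 t (List.dropLast_subset u ht)
      · rcases List.mem_cons.1 ht with rfl | ht
        · constructor
          · rcases hefac with h | h
            · exact Or.inl ((mul_H_mem_iff₁ hinf hg₀ e).2 h)
            · exact Or.inr ((mul_H_mem_iff₂ hinf hg₀ e).2 h)
          · intro hc
            exact heH (by simpa using mul_mem hc (inv_mem hg₀))
        · exact hwg.1 t ht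
    · rw [List.Chain', List.isChain_append]
      have hchain_u := hu.2
      rw [← hsplit, List.Chain', List.isChain_append] at hchain_u
      obtain ⟨hcL, -, hbd⟩ := hchain_u
      refine ⟨hcL, ?_, ?_⟩
      · rw [List.isChain_cons]
        refine ⟨?_, hwg.2⟩
        intro y hy
        have hy' : wg.head? = some y := hy
        have hcyc := hgcyc y (wg.getLast hne_wg) hy' (List.getLast?_eq_getLast hne_wg)
        rw [← hew] at hcyc
        constructor
        · intro hc
          exact hcyc.1 ⟨hc.2, (mul_H_mem_iff₁ hinf hg₀ e).1 hc.1⟩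
        · intro hc
          exact hcyc.2 ⟨hc.2, (mul_H_mem_iff₂ hinf hg₀ e).1 hc.1⟩
      · intro x hx y hy
        simp only [List.head?_cons, Option.mem_def, Option.some.injEq] at hy
        subst hy
        have hRxe := hbd x hx e (by simp)
        constructor
        · intro hc
          exact hRxe.1 ⟨hc.1, (mul_H_mem_iff₁ hinf hg₀ e).1 hc.2⟩
        · intro hc
          exact hRxe.2 ⟨hc.1, (mul_H_mem_iff₂ hinf hg₀ e).1 hc.2⟩
    · have : L.length = u.length - 1 := by rw [hL, List.length_dropLast]
      have hupos : 1 ≤ u.length := by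
        rcases u with - | ⟨a, u⟩
        · exact absurd rfl hne_u
        · simp
      have h2 : 1 ≤ (m + 1) * wg.length :=
        le_trans (by omega) (Nat.le_mul_of_pos_left wg.length (by omega))
      simp only [List.length_append, List.length_cons, this, hulen, Nat.succ_mul]
      omega
    · have hprod : (L ++ (e * g₀) :: wg).prod = u.prod * g₀ * wg.prod := by
        rw [List.prod_append, List.prod_cons, ← hsplit, List.prod_append, List.prod_cons,
          List.prod_nil]
        group
      rw [pow_succ, hupow, hgdec, hprod]
      group
    · rw [List.getLast?_append_cons]
      rcases wg with - | ⟨y, ys⟩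
      · exact absurd rfl hne_wg
      · rw [List.getLast?_cons_cons]

section Pushout

open Monoid

/-- The two-element family of groups `G₁`, `G₂`. -/
def fam (G₁ G₂ : Subgroup G) : Bool → Type u := fun b => cond b ↥G₁ ↥G₂

instance famGroup (G₁ G₂ : Subgroup G) : ∀ b, Group (fam G₁ G₂ b)
  | true => inferInstanceAs (Group ↥G₁)
  | false => inferInstanceAs (Group ↥G₂)

/-- The diagram maps. -/
def famφ {G₁ G₂ H : Subgroup G} (h₁ : H ≤ G₁) (h₂ : H ≤ G₂) : ∀ b, ↥H →* fam G₁ G₂ b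
  | true => Subgroup.inclusion h₁
  | false => Subgroup.inclusion h₂

open Classical in
/-- Letters of words. -/
noncomputable def letter (G₁ G₂ : Subgroup G) (x : G) : Σ b, fam G₁ G₂ b :=
  if hx : x ∈ G₁ then ⟨true, (⟨x, hx⟩ : ↥G₁)⟩
  else if hx2 : x ∈ G₂ then ⟨false, (⟨x, hx2⟩ : ↥G₂)⟩
  else ⟨true, 1⟩

theorem letter_eq {x : G} (hor : x ∈ G₁ ∨ x ∈ G₂) :
    (∃ hx : x ∈ G₁, letter G₁ G₂ x = ⟨true, (⟨x, hx⟩ : ↥G₁)⟩) ∨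
    (∃ hx : x ∈ G₂, letter G₁ G₂ x = ⟨false, (⟨x, hx⟩ : ↥G₂)⟩) := by
  unfold letter
  by_cases hx1 : x ∈ G₁
  · exact Or.inl ⟨hx1, dif_pos hx1⟩
  · have hx2 := hor.resolve_left hx1
    exact Or.inr ⟨hx2, by rw [dif_neg hx1, dif_pos hx2]⟩

theorem chain'_mem_imp {α : Type*} {R S : α → α → Prop} {Q : α → Prop} :
    ∀ {l : List α}, l.Chain' R → (∀ x ∈ l, Q x) →
      (∀ x y, Q x → Q y → R x y → S x y) → l.Chain' S
  | [], _, _, _ => List.isChain_nil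
  | [_], _, _, _ => List.isChain_singleton _
  | a :: b :: l, h, hm, himp => by
    rw [List.Chain', List.isChain_cons_cons] at h ⊢
    exact ⟨himp a b (hm a (by simp)) (hm b (by simp)) h.1,
      chain'_mem_imp h.2 (fun x hx => hm x (List.mem_cons_of_mem _ hx)) himp⟩

theorem length_unique (hinf : G₁ ⊓ G₂ = H) (hG : IsAmalgamIn G₁ G₂ H ⊤) {w v : List G}
    (hw : ReducedWord G₁ G₂ H w) (hv : ReducedWord G₁ G₂ H v)
    {a b : G} (ha : a ∈ H) (hb : b ∈ H) (heq : a * w.prod = b * v.prod) :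
    w.length = v.length := by
  classical
  obtain ⟨-, hsup, huniv⟩ := hG
  have h₁ : H ≤ G₁ := hinf ▸ inf_le_left
  have h₂ : H ≤ G₂ := hinf ▸ inf_le_right
  set φ := famφ h₁ h₂ with hφ
  have hφinj : ∀ i, Function.Injective (φ i) := by
    intro i
    cases i
    · exact Subgroup.inclusion_injective h₂
    · exact Subgroup.inclusion_injective h₁
  -- the homomorphism from `G` to the pushout
  have compat : ∀ (x : G) (hx₁ : x ∈ G₁) (hx₂ : x ∈ G₂),
      (PushoutI.of (φ := φ) true) ⟨x, hx₁⟩ = (PushoutI.of (φ := φ) false) ⟨x, hx₂⟩ := by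
    intro x hx₁ hx₂
    have hxH : x ∈ H := hinf ▸ ⟨hx₁, hx₂⟩
    have e1 : (⟨x, hx₁⟩ : ↥G₁) = φ true ⟨x, hxH⟩ := rfl
    have e2 : (⟨x, hx₂⟩ : ↥G₂) = φ false ⟨x, hxH⟩ := rfl
    rw [show ((⟨x, hx₁⟩ : ↥G₁) : fam G₁ G₂ true) = φ true ⟨x, hxH⟩ from rfl,
      show ((⟨x, hx₂⟩ : ↥G₂) : fam G₁ G₂ false) = φ false ⟨x, hxH⟩ from rfl,
      PushoutI.of_apply_eq_base, PushoutI.of_apply_eq_base]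
  obtain ⟨f, ⟨hf₁, hf₂⟩, -⟩ :=
    huniv (PushoutI φ) (PushoutI.of (φ := φ) true) (PushoutI.of (φ := φ) false) compat
  set ψ : G →* PushoutI φ :=
    f.comp (Subgroup.topEquiv (G := G)).symm.toMonoidHom with hψdef
  have hψ₁ : ∀ (x : G) (hx : x ∈ G₁), ψ x = PushoutI.of (φ := φ) true ⟨x, hx⟩ := by
    intro x hx
    exact hf₁ x hx trivial
  have hψ₂ : ∀ (x : G) (hx : x ∈ G₂), ψ x = PushoutI.of (φ := φ) false ⟨x, hx⟩ := by
    intro x hx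
    exact hf₂ x hx trivial
  have hψH : ∀ (x : G) (hx : x ∈ H), ψ x = PushoutI.base φ ⟨x, hx⟩ := by
    intro x hx
    rw [hψ₁ x (h₁ hx),
      show ((⟨x, h₁ hx⟩ : ↥G₁) : fam G₁ G₂ true) = φ true ⟨x, hx⟩ from rfl,
      PushoutI.of_apply_eq_base]
  -- building reduced pushout words from reduced lists
  have mkWord : ∀ (u : List G), ReducedWord G₁ G₂ H u →
      ∃ W : Monoid.CoprodI.Word (fam G₁ G₂),
        W.toList = u.map (letter G₁ G₂) ∧
        PushoutI.Reduced φ W ∧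
        PushoutI.ofCoprodI (φ := φ) W.prod = ψ u.prod := by
    intro u hu
    refine ⟨⟨u.map (letter G₁ G₂), ?_, ?_⟩, rfl, ?_, ?_⟩
    · intro l hl
      rw [List.mem_map] at hl
      obtain ⟨x, hx, rfl⟩ := hl
      obtain ⟨hor, hxH⟩ := hu.1 x hx
      rcases letter_eq hor with ⟨hg, hleq⟩ | ⟨hg, hleq⟩ <;> rw [hleq] <;>
        · intro hone
          apply hxH
          have : x = 1 := congrArg Subtype.val (by exact_mod_cast hone)
          rw [this]; exact one_mem _
    · rw [List.isChain_map]
      refine chain'_mem_imp hu.2 hu.1 ?_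
      intro x y hQx hQy hR
      rcases letter_eq hQx.1 with ⟨hg, hleq⟩ | ⟨hg, hleq⟩ <;>
        rcases letter_eq hQy.1 with ⟨hg', hleq'⟩ | ⟨hg', hleq'⟩ <;>
        rw [hleq, hleq']
      · exact fun _ => hR.1 ⟨hg, hg'⟩
      · simp
      · simp
      · exact fun _ => hR.2 ⟨hg, hg'⟩
    · intro l hl
      simp only [List.mem_map] at hl
      obtain ⟨x, hx, rfl⟩ := hl
      obtain ⟨hor, hxH⟩ := hu.1 x hx
      rcases letter_eq hor with ⟨hg, hleq⟩ | ⟨hg, hleq⟩ <;> rw [hleq] <;>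
        · rintro ⟨y, hy⟩
          apply hxH
          have : x = (y : G) := (congrArg Subtype.val hy).symm
          rw [this]; exact y.2
    · show PushoutI.ofCoprodI (Monoid.CoprodI.Word.prod _) = _
      rw [Monoid.CoprodI.Word.prod]
      simp only [List.map_map]
      rw [MonoidHom.map_list_prod (PushoutI.ofCoprodI (φ := φ)), MonoidHom.map_list_prod ψ,
        List.map_map]
      congr 1
      refine List.map_congr_left ?_
      intro x hx
      obtain ⟨hor, hxH⟩ := hu.1 x hx
      show PushoutI.ofCoprodI (Monoid.CoprodI.of (letter G₁ G₂ x).snd) = ψ x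
      rcases letter_eq hor with ⟨hg, hleq⟩ | ⟨hg, hleq⟩ <;> rw [hleq]
      · exact (PushoutI.ofCoprodI_of (φ := φ) true ⟨x, hg⟩).trans (hψ₁ x hg).symm
      · exact (PushoutI.ofCoprodI_of (φ := φ) false ⟨x, hg⟩).trans (hψ₂ x hg).symm
  -- use the normal form theorem
  obtain ⟨d⟩ := PushoutI.NormalWord.transversal_nonempty φ hφinj
  obtain ⟨W, hWl, hWred, hWprod⟩ := mkWord w hw
  obtain ⟨V, hVl, hVred, hVprod⟩ := mkWord v hv
  obtain ⟨W', hW'prod, hW'map⟩ := hWred.exists_normalWord_prod_eq d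
  obtain ⟨V', hV'prod, hV'map⟩ := hVred.exists_normalWord_prod_eq d
  have hsmul : ((⟨a, ha⟩ : ↥H) • W').prod = ((⟨b, hb⟩ : ↥H) • V').prod := by
    rw [Monoid.PushoutI.NormalWord.prod_base_smul, PushoutI.NormalWord.prod_base_smul,
      hW'prod, hV'prod, hWprod, hVprod, ← hψH a ha, ← hψH b hb, ← map_mul, ← map_mul, heq]
  have hWV : (⟨a, ha⟩ : ↥H) • W' = (⟨b, hb⟩ : ↥H) • V' := Monoid.PushoutI.NormalWord.prod_injective hsmul
  have hlist : W'.toList = V'.toList := by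
    have := congrArg (fun z : Monoid.PushoutI.NormalWord d => z.toList) hWV
    simpa [Monoid.PushoutI.NormalWord.base_smul_def'] using this
  have lw : w.length = W'.toList.length := by
    have := congrArg List.length hW'map
    simp only [List.length_map] at this
    rw [this, hWl, List.length_map]
  have lv : v.length = V'.toList.length := by
    have := congrArg List.length hV'map
    simp only [List.length_map] at this
    rw [this, hVl, List.length_map]
  rw [lw, lv, hlist]

end Pushout

theorem conj_le (hG : IsAmalgamIn G₁ G₂ H ⊤) {g h k : G} (hconj : h = k * g * k⁻¹)
    {g₀ : G} (hg₀ : g₀ ∈ H) {wg : List G} (hwg : ReducedWord G₁ G₂ H wg)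
    (hgdec : g = g₀ * wg.prod) (hglen : 2 ≤ wg.length)
    (hgcyc : ∀ x y : G, wg.head? = some x → wg.getLast? = some y →
      ¬(x ∈ G₁ ∧ y ∈ G₁) ∧ ¬(x ∈ G₂ ∧ y ∈ G₂))
    {h₀ : G} (hh₀ : h₀ ∈ H) {wh : List G} (hwh : ReducedWord G₁ G₂ H wh)
    (hhdec : h = h₀ * wh.prod) (hhlen : 2 ≤ wh.length)
    (hhcyc : ∀ x y : G, wh.head? = some x → wh.getLast? = some y →
      ¬(x ∈ G₁ ∧ y ∈ G₁) ∧ ¬(x ∈ G₂ ∧ y ∈ G₂)) :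
    wh.length ≤ wg.length := by
  have hinf : G₁ ⊓ G₂ = H := hG.1
  have hsup : G₁ ⊔ G₂ = ⊤ := hG.2.1
  obtain ⟨nk, hk⟩ := P_exists hinf hsup k
  by_contra hlt
  push_neg at hlt
  set m := 2 * nk with hm
  obtain ⟨uh, huh, huhlen, huhpow, -⟩ := pow_dec hinf hh₀ hwh hhdec hhlen hhcyc m
  obtain ⟨ug, hug, huglen, hugpow, -⟩ := pow_dec hinf hg₀ hwg hgdec hglen hgcyc m
  have hgP : P G₁ G₂ H (g ^ (m + 1)) ((m + 1) * wg.length) :=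
    ⟨g₀, hg₀, ug, hug, hugpow, le_of_eq huglen⟩
  have hkinv : P G₁ G₂ H k⁻¹ nk := P_inv hinf hk
  have hpow : h ^ (m + 1) = k * g ^ (m + 1) * k⁻¹ := by
    rw [hconj, ← MulAut.conj_apply, ← map_pow, MulAut.conj_apply]
  have hP : P G₁ G₂ H (h ^ (m + 1)) (nk + (m + 1) * wg.length + nk) := by
    rw [hpow]
    exact P_mul hinf (P_mul hinf hk hgP) hkinv
  obtain ⟨c, hc, w', hw', heq', hlen'⟩ := hP
  have hul : uh.length = w'.length :=
    length_unique hinf hG huh hw' hh₀ hc (huhpow.symm.trans heq')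
  have key : (m + 1) * wh.length ≤ nk + (m + 1) * wg.length + nk := by
    rw [← huhlen, hul]; exact hlen'
  have h1 : (m + 1) * (wg.length + 1) ≤ (m + 1) * wh.length :=
    Nat.mul_le_mul (le_refl (m + 1)) hlt
  rw [Nat.mul_add, Nat.mul_one] at h1
  have h2 := le_trans h1 key
  rw [show nk + (m + 1) * wg.length + nk = (m + 1) * wg.length + (nk + nk) from by ring] at h2
  have h3 := Nat.le_of_add_le_add_left h2
  omega

end Stmt4Aux

theorem stmt4 {G : Type u} [Group G] (G₁ G₂ H : Subgroup G)
    (hG : IsAmalgamIn G₁ G₂ H ⊤)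
    (g h k : G) (hconj : h = k * g * k⁻¹)
    (g₀ : G) (hg₀ : g₀ ∈ H) (wg : List G)
    (hwg : ReducedWord G₁ G₂ H wg) (hgdec : g = g₀ * wg.prod)
    (hglen : 2 ≤ wg.length)
    (hgcyc : ∀ x y : G, wg.head? = some x → wg.getLast? = some y →
      ¬(x ∈ G₁ ∧ y ∈ G₁) ∧ ¬(x ∈ G₂ ∧ y ∈ G₂))
    (h₀ : G) (hh₀ : h₀ ∈ H) (wh : List G)
    (hwh : ReducedWord G₁ G₂ H wh) (hhdec : h = h₀ * wh.prod)
    (hhlen : 2 ≤ wh.length)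
    (hhcyc : ∀ x y : G, wh.head? = some x → wh.getLast? = some y →
      ¬(x ∈ G₁ ∧ y ∈ G₁) ∧ ¬(x ∈ G₂ ∧ y ∈ G₂)) :
    wg.length = wh.length := by
  have le1 : wh.length ≤ wg.length :=
    Stmt4Aux.conj_le hG hconj hg₀ hwg hgdec hglen hgcyc hh₀ hwh hhdec hhlen hhcyc
  have hconj' : g = k⁻¹ * h * (k⁻¹)⁻¹ := by rw [hconj]; group
  have le2 : wg.length ≤ wh.length :=
    Stmt4Aux.conj_le hG hconj' hh₀ hwh hhdec hhlen hhcyc hg₀ hwg hgdec hglen hgcyc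
  exact le_antisymm le2 le1
end

section
/- Suppose H₀ ⊆ H is a subgroup such that for every x ∈ G₁ ∪ G₂, the inclusion xH₀x⁻¹ ⊆ H implies xH₀x⁻¹ = H₀. Then the normalizer of H₀ in G = G₁ *_H G₂ is the subgroup of G generated by N_{G₁}(H₀) ∪ N_{G₂}(H₀) (indeed, H₀ is normal in H, H is contained in both N_{G₁}(H₀) and N_{G₂}(H₀), and N_G(H₀) = N_{G₁}(H₀) *_H N_{G₂}(H₀)). -/
universe u

namespace Stmt5Aux

open Monoid Subgroup List

variable {G : Type u} [Group G]

/-- Adjacent letters never lie in a common `A b`. -/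
def SRel (A : Bool → Subgroup G) (x y : G) : Prop := ¬ ∃ b, x ∈ A b ∧ y ∈ A b

/-- Alternating reduced lists. -/
def AltList (A : Bool → Subgroup G) (H : Subgroup G) (l : List G) : Prop :=
  (∀ x ∈ l, (∃ b, x ∈ A b) ∧ x ∉ H) ∧ l.IsChain (SRel A)

variable (A : Bool → Subgroup G) (H : Subgroup G)
variable (hle : ∀ b, H ≤ A b)

/-- The inclusion maps. -/
def phi : ∀ b : Bool, ↥H →* ↥(A b) := fun b => Subgroup.inclusion (hle b)

/-- The canonical map from the pushout into `G`. -/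
def piG : PushoutI (phi A H hle) →* G :=
  PushoutI.lift (fun b => (A b).subtype) H.subtype (fun b => by ext x; rfl)

@[simp] lemma piG_of (b : Bool) (x : ↥(A b)) :
    piG A H hle (PushoutI.of b x) = (x : G) := by simp [piG]

@[simp] lemma piG_base (h : ↥H) :
    piG A H hle (PushoutI.base (phi A H hle) h) = (h : G) := by simp [piG]

lemma exists_word :
    ∀ (l : List G), AltList A H l → ∀ (b : Bool), (∀ x ∈ l.head?, x ∈ A b) →
    ∃ w : CoprodI.Word (fun b => ↥(A b)), PushoutI.Reduced (phi A H hle) w ∧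
      piG A H hle (PushoutI.ofCoprodI w.prod) = l.prod ∧
      (w.toList = [] ↔ l = []) ∧ (∀ c ∈ w.fstIdx, c = b) := by
  intro l
  induction l with
  | nil =>
    intro _ b _
    refine ⟨.empty, ?_, by simp [CoprodI.Word.empty, CoprodI.Word.prod], by simp [CoprodI.Word.empty], ?_⟩
    · intro g hg; simp [CoprodI.Word.empty] at hg
    · intro c hc; simp [CoprodI.Word.fstIdx, CoprodI.Word.empty] at hc
  | cons x t ih =>
    intro hl b hb
    have hxb : x ∈ A b := hb x rfl
    have hxH : x ∉ H := (hl.1 x (List.mem_cons_self)).2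
    have hlt : AltList A H t :=
      ⟨fun y hy => hl.1 y (List.mem_cons_of_mem _ hy), hl.2.tail⟩
    have hhead : ∀ y ∈ t.head?, y ∈ A (!b) := by
      intro y hy
      have hyt : y ∈ t := List.mem_of_mem_head? hy
      obtain ⟨⟨c, hyc⟩, -⟩ := hl.1 y (List.mem_cons_of_mem _ hyt)
      have hS : SRel A x y := (List.isChain_cons.1 hl.2).1 y hy
      have hcb : c ≠ b := fun h => hS ⟨b, hxb, h ▸ hyc⟩
      have : c = !b := by revert hcb; cases c <;> cases b <;> simp
      exact this ▸ hyc
    obtain ⟨w, hred, hprod, hiff, hfst⟩ := ih hlt (!b) hhead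
    have hfstne : w.fstIdx ≠ some b := by
      intro h
      have := hfst b (h ▸ rfl)
      simp at this
    have hx1 : (⟨x, hxb⟩ : ↥(A b)) ≠ 1 := by
      intro h
      apply hxH
      have : x = 1 := congrArg Subtype.val h
      rw [this]; exact one_mem H
    refine ⟨CoprodI.Word.cons ⟨x, hxb⟩ w hfstne hx1, ?_, ?_, ?_, ?_⟩
    · intro g hg
      rcases List.mem_cons.1 hg with hg | hg
      · subst hg
        rintro ⟨h', hh'⟩
        apply hxH
        have : (h' : G) = x := congrArg Subtype.val hh'
        exact this ▸ h'.2
      · exact hred g hg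
    · rw [CoprodI.Word.prod_cons, map_mul, map_mul, PushoutI.ofCoprodI_of, piG_of, hprod]
      simp
    · simp [CoprodI.Word.cons]
    · intro c hc
      rw [CoprodI.Word.fstIdx_cons] at hc
      exact (Option.some_inj.1 hc).symm

lemma prod_not_mem (hinj : Function.Injective (piG A H hle))
    (l : List G) (hl : AltList A H l) (hne : l ≠ []) : l.prod ∉ H := by
  intro hmem
  obtain ⟨x, t, rfl⟩ := List.exists_cons_of_ne_nil hne
  obtain ⟨⟨b, hxb⟩, -⟩ := hl.1 x (List.mem_cons_self)
  obtain ⟨w, hred, hprod, hiff, -⟩ := exists_word A H hle _ hl b (by intro y hy; rw [List.head?_cons, Option.mem_some_iff] at hy; exact hy ▸ hxb)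
  have hbase : PushoutI.ofCoprodI w.prod ∈ (PushoutI.base (phi A H hle)).range := by
    refine ⟨⟨(x :: t).prod, hmem⟩, hinj ?_⟩
    rw [piG_base, hprod]
  have := hred.eq_empty_of_mem_range (fun b => Subgroup.inclusion_injective _) hbase
  rw [this] at hiff
  exact (List.cons_ne_nil x t) (hiff.1 rfl)


variable {A H}

lemma srel_symm {x y : G} (h : SRel A x y) : SRel A y x := by
  rintro ⟨b, h1, h2⟩; exact h ⟨b, h2, h1⟩

lemma altList_tail {x : G} {t : List G} (h : AltList A H (x :: t)) : AltList A H t :=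
  ⟨fun y hy => h.1 y (List.mem_cons_of_mem _ hy), h.2.tail⟩

lemma inf_ne (hH : A true ⊓ A false = H) {c d : Bool} (h : c ≠ d) : A c ⊓ A d ≤ H := by
  cases c <;> cases d <;> simp_all [inf_comm, le_refl]

/-- Merging an element of `H` into the head of an alternating list. -/
lemma altList_cons_mul (hle : ∀ b, H ≤ A b) {h y : G} {t : List G} (hh : h ∈ H)
    (hl : AltList A H (y :: t)) : AltList A H ((h * y) :: t) := by
  obtain ⟨⟨c, hyc⟩, hyH⟩ := hl.1 y (List.mem_cons_self)
  refine ⟨?_, ?_⟩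
  · intro z hz
    rcases List.mem_cons.1 hz with rfl | hz
    · refine ⟨⟨c, mul_mem (hle c hh) hyc⟩, fun hzy => hyH ?_⟩
      have : y = h⁻¹ * (h * y) := by group
      rw [this]; exact mul_mem (inv_mem hh) hzy
    · exact hl.1 z (List.mem_cons_of_mem _ hz)
  · rw [List.isChain_cons]
    refine ⟨?_, hl.2.tail⟩
    intro u hu
    have hS : SRel A y u := (List.isChain_cons.1 hl.2).1 u hu
    rintro ⟨d, h1, h2⟩
    apply hS
    refine ⟨d, ?_, h2⟩
    have : y = h⁻¹ * (h * y) := by group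
    rw [this]; exact mul_mem (hle d (inv_mem hh)) h1

/-- Inverse-reverse of an alternating list is alternating. -/
lemma altList_reverse_inv {l : List G} (hl : AltList A H l) :
    AltList A H (l.reverse.map fun x => x⁻¹) := by
  refine ⟨?_, ?_⟩
  · intro z hz
    rw [List.mem_map] at hz
    obtain ⟨y, hy, rfl⟩ := hz
    rw [List.mem_reverse] at hy
    obtain ⟨⟨c, hyc⟩, hyH⟩ := hl.1 y hy
    exact ⟨⟨c, inv_mem hyc⟩, fun h => hyH (by simpa using inv_mem h)⟩
  · rw [List.isChain_map, List.isChain_reverse]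
    refine hl.2.imp ?_
    intro a b hab
    rintro ⟨c, h1, h2⟩
    exact hab ⟨c, by simpa using h2, by simpa using h1⟩

lemma exists_decomp (hH : A true ⊓ A false = H) (hle : ∀ b, H ≤ A b) :
    ∀ g ∈ A true ⊔ A false,
      g ∈ H ∨ ∃ l, AltList A H l ∧ l ≠ [] ∧ g = l.prod := by
  have step : ∀ x, (∃ b, x ∈ A b) →
      ∀ g, (g ∈ H ∨ ∃ l, AltList A H l ∧ l ≠ [] ∧ g = l.prod) →
      (x * g ∈ H ∨ ∃ l, AltList A H l ∧ l ≠ [] ∧ x * g = l.prod) := by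
    rintro x ⟨b, hxb⟩ g hg
    rcases hg with hgH | ⟨l, hl, hne, rfl⟩
    · by_cases hxgH : x * g ∈ H
      · exact Or.inl hxgH
      · refine Or.inr ⟨[x * g], ⟨?_, List.isChain_singleton _⟩, by simp, by simp⟩
        intro z hz
        rw [List.mem_singleton] at hz
        subst hz
        exact ⟨⟨b, mul_mem hxb (hle b hgH)⟩, hxgH⟩
    · obtain ⟨y, t, rfl⟩ := List.exists_cons_of_ne_nil hne
      obtain ⟨⟨c, hyc⟩, hyH⟩ := hl.1 y (List.mem_cons_self)
      by_cases hxH : x ∈ H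
      · refine Or.inr ⟨(x * y) :: t, altList_cons_mul hle hxH hl, by simp, by simp [mul_assoc]⟩
      by_cases hS : ∃ d, x ∈ A d ∧ y ∈ A d
      · obtain ⟨d, hxd, hyd⟩ := hS
        by_cases hzH : x * y ∈ H
        · cases t with
          | nil => exact Or.inl (by simpa using hzH)
          | cons u t' =>
            refine Or.inr ⟨(x * y * u) :: t', altList_cons_mul hle hzH (altList_tail hl),
              by simp, by simp [mul_assoc]⟩
        · refine Or.inr ⟨(x * y) :: t, ⟨?_, ?_⟩, by simp, by simp [mul_assoc]⟩
          · intro z hz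
            rcases List.mem_cons.1 hz with rfl | hz
            · exact ⟨⟨d, mul_mem hxd hyd⟩, hzH⟩
            · exact hl.1 z (List.mem_cons_of_mem _ hz)
          · rw [List.isChain_cons]
            refine ⟨?_, hl.2.tail⟩
            intro u hu
            have hSyu : SRel A y u := (List.isChain_cons.1 hl.2).1 u hu
            rintro ⟨e, h1, h2⟩
            by_cases hed : e = d
            · subst hed
              refine hSyu ⟨e, ?_, h2⟩
              have : y = x⁻¹ * (x * y) := by group
              rw [this]; exact mul_mem (inv_mem hxd) h1
            · exact hzH (inf_ne hH hed ⟨h1, mul_mem hxd hyd⟩)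
      · refine Or.inr ⟨x :: y :: t, ⟨?_, ?_⟩, by simp, by simp⟩
        · intro z hz
          rcases List.mem_cons.1 hz with rfl | hz
          · exact ⟨⟨b, hxb⟩, hxH⟩
          · exact hl.1 z hz
        · rw [List.isChain_cons]
          exact ⟨fun u hu => by rw [List.head?_cons, Option.mem_some_iff] at hu; exact hu ▸ hS,
            hl.2⟩
  intro g hg
  rw [Subgroup.sup_eq_closure] at hg
  induction hg using Subgroup.closure_induction_left with
  | one => exact Or.inl (one_mem H)
  | mul_left x hx y hy ih =>
    refine step x ?_ y ih
    rcases hx with hx | hx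
    exacts [⟨true, hx⟩, ⟨false, hx⟩]
  | inv_mul_cancel x hx y hy ih =>
    refine step x⁻¹ ?_ y ih
    rcases hx with hx | hx
    exacts [⟨true, inv_mem hx⟩, ⟨false, inv_mem hx⟩]


/-- The sandwich word `t⁻¹ᵣ ++ m :: t` used in the normalizer argument. -/
lemma altList_sandwich {x m : G} {t : List G} (hl : AltList A H (x :: t))
    (hmb : ∃ b, m ∈ A b) (hbm : ∀ d, m ∈ A d → x ∈ A d) (hmH : m ∉ H) :
    AltList A H ((t.reverse.map fun z => z⁻¹) ++ m :: t) ∧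
      ((t.reverse.map fun z => z⁻¹) ++ m :: t).prod = t.prod⁻¹ * (m * t.prod) := by
  have hlt : AltList A H t := ⟨fun y hy => hl.1 y (List.mem_cons_of_mem _ hy), hl.2.tail⟩
  have hrev := altList_reverse_inv hlt
  have hSmu : ∀ u ∈ t.head?, SRel A m u := by
    intro u hu
    have hSxu : SRel A x u := (List.isChain_cons.1 hl.2).1 u hu
    rintro ⟨d, h1, h2⟩
    exact hSxu ⟨d, hbm d h1, h2⟩
  constructor
  · refine ⟨?_, ?_⟩
    · intro z hz
      rcases List.mem_append.1 hz with hz | hz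
      · exact hrev.1 z hz
      · rcases List.mem_cons.1 hz with rfl | hz
        · exact ⟨hmb, hmH⟩
        · exact hlt.1 z hz
    · rw [List.isChain_append]
      refine ⟨hrev.2, ?_, ?_⟩
      · rw [List.isChain_cons]
        exact ⟨hSmu, hlt.2⟩
      · intro zi hzi u hu
        rw [List.head?_cons, Option.mem_some_iff] at hu
        subst hu
        -- zi is the last of `t.reverse.map inv`, i.e. `u⁻¹` for `u` the head of `t`
        rw [List.map_reverse, List.getLast?_reverse, List.head?_map] at hzi
        rcases t with _ | ⟨u, t'⟩
        · simp at hzi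
        · simp only [List.head?_cons, Option.map_some, Option.mem_some_iff] at hzi
          subst hzi
          have hS : SRel A m u := hSmu u (by simp)
          rintro ⟨d, h1, h2⟩
          exact hS ⟨d, h2, by simpa using h1⟩
  · rw [List.prod_append, List.prod_cons, List.map_reverse]
    rw [← List.prod_inv_reverse]


lemma norm_lemma (hH : A true ⊓ A false = H) (hle : ∀ b, H ≤ A b)
    (hR : ∀ l, AltList A H l → l ≠ [] → l.prod ∉ H)
    {H₀ : Subgroup G} (hH₀ : H₀ ≤ H)
    (hnorm : ∀ x : G, (∃ b, x ∈ A b) → (∀ n ∈ H₀, x * n * x⁻¹ ∈ H) → x ∈ (Subgroup.normalizer (H₀ : Set G))) :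
    ∀ l, AltList A H l → (∀ n ∈ H₀, l.prod⁻¹ * n * l.prod ∈ H) →
      l.prod ∈ (A true ⊓ (Subgroup.normalizer (H₀ : Set G))) ⊔ (A false ⊓ (Subgroup.normalizer (H₀ : Set G))) := by
  intro l
  induction l with
  | nil => intro _ _; simp only [List.prod_nil]; exact one_mem _
  | cons x t ih =>
    intro hl hcnd
    obtain ⟨⟨b, hxb⟩, hxH⟩ := hl.1 x (List.mem_cons_self)
    have hlt : AltList A H t := altList_tail hl
    have hconj : ∀ n ∈ H₀, x⁻¹ * n * x ∈ H := by
      by_contra hcon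
      push_neg at hcon
      obtain ⟨n, hn, hm⟩ := hcon
      have hmAb : x⁻¹ * n * x ∈ A b :=
        mul_mem (mul_mem (inv_mem hxb) (hle b (hH₀ hn))) hxb
      have hbm : ∀ d, x⁻¹ * n * x ∈ A d → x ∈ A d := by
        intro d hmd
        by_cases hdb : d = b
        · exact hdb ▸ hxb
        · exact absurd (inf_ne hH hdb ⟨hmd, hmAb⟩) hm
      obtain ⟨hAlt, hprod⟩ := altList_sandwich hl ⟨b, hmAb⟩ hbm hm
      refine hR _ hAlt (by simp) ?_
      rw [hprod]
      have key : t.prod⁻¹ * (x⁻¹ * n * x * t.prod) =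
          (x :: t).prod⁻¹ * n * (x :: t).prod := by
        rw [List.prod_cons]; group
      rw [key]
      exact hcnd n hn
    have hxnorm : x ∈ (Subgroup.normalizer (H₀ : Set G)) := by
      have h1 : x⁻¹ ∈ (Subgroup.normalizer (H₀ : Set G)) := by
        refine hnorm x⁻¹ ⟨b, inv_mem hxb⟩ ?_
        intro n hn
        simpa [mul_assoc] using hconj n hn
      simpa using h1
    have ht : ∀ n ∈ H₀, t.prod⁻¹ * n * t.prod ∈ H := by
      intro n hn
      have hn' : x * n * x⁻¹ ∈ H₀ := (Subgroup.mem_normalizer_iff.1 hxnorm n).1 hn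
      have key : (x :: t).prod⁻¹ * (x * n * x⁻¹) * (x :: t).prod =
          t.prod⁻¹ * n * t.prod := by
        rw [List.prod_cons]; group
      rw [← key]
      exact hcnd _ hn'
    have hts := ih hlt ht
    rw [List.prod_cons]
    refine mul_mem ?_ hts
    cases b
    · exact Subgroup.mem_sup_right ⟨hxb, hxnorm⟩
    · exact Subgroup.mem_sup_left ⟨hxb, hxnorm⟩


/-- An element of the transversal set other than 1 is not in the range of φ. -/
lemma not_mem_range_of_mem_set (d : PushoutI.NormalWord.Transversal (phi A H hle))
    {i : Bool} {g : ↥(A i)} (hg : g ∈ d.set i) (h1 : g ≠ 1) :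
    g ∉ (phi A H hle i).range := by
  rintro ⟨h, rfl⟩
  apply h1
  have hinj := (d.compl i).1
  have := hinj (a₁ := (⟨⟨phi A H hle i h, ⟨h, rfl⟩⟩, ⟨1, d.one_mem i⟩⟩ : _ × _))
    (a₂ := (⟨⟨1, one_mem _⟩, ⟨phi A H hle i h, hg⟩⟩ : _ × _)) (by simp)
  have h2 := congrArg (fun x => (x.1 : ↥(A i))) this
  simp only at h2
  rw [h2]

/-- The letters of a word with distinct adjacent indices and letters outside `H`
form a `SRel`-chain. -/
lemma chain_srel (hH : A true ⊓ A false = H) :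
    ∀ (lw : List (Σ b, ↥(A b))), lw.IsChain (fun a c => a.1 ≠ c.1) →
    (∀ x ∈ lw, ((x.2 : G)) ∉ H) → (lw.map fun x => ((x.2 : G))).IsChain (SRel A) := by
  intro lw
  induction lw with
  | nil => intro _ _; simp
  | cons a rest ih =>
    intro hne hout
    rw [List.map_cons, List.isChain_cons]
    refine ⟨?_, ih hne.tail (fun x hx => hout x (List.mem_cons_of_mem _ hx))⟩
    intro u hu
    cases rest with
    | nil => simp at hu
    | cons c rest' =>
      rw [List.map_cons, List.head?_cons, Option.mem_some_iff] at hu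
      subst hu
      have hac : a.1 ≠ c.1 := (List.isChain_cons.1 hne).1 c (by
        rw [List.head?_cons, Option.mem_some_iff])
      rintro ⟨e, h1, h2⟩
      by_cases hea : e = a.1
      · subst hea
        refine hout c (List.mem_cons_of_mem _ (List.mem_cons_self)) ?_
        exact inf_ne hH hac ⟨h2, c.2.2⟩
      · refine hout a (List.mem_cons_self) ?_
        exact inf_ne hH hea ⟨h1, a.2.2⟩

/-- `piG` maps the product of a coproduct word to the product of the letter values. -/
lemma piG_word_prod (w : CoprodI.Word fun b => ↥(A b)) :
    piG A H hle (PushoutI.ofCoprodI w.prod) = (w.toList.map fun x => ((x.2 : G))).prod := by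
  rw [CoprodI.Word.prod, map_list_prod, map_list_prod, List.map_map, List.map_map]
  refine congrArg List.prod (List.map_congr_left ?_)
  intro x _
  simp [Function.comp]

lemma piG_injective (hH : A true ⊓ A false = H)
    (hR : ∀ l, AltList A H l → l ≠ [] → l.prod ∉ H) :
    Function.Injective (piG A H hle) := by
  have hφinj : ∀ b, Function.Injective (phi A H hle b) :=
    fun b => Subgroup.inclusion_injective _
  obtain ⟨d⟩ := PushoutI.NormalWord.transversal_nonempty (phi A H hle) hφinj
  rw [injective_iff_map_eq_one]
  intro p hp
  classical
  set w := (PushoutI.NormalWord.equiv (d := d)) p with hwdef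
  have hw : w.prod = p := PushoutI.NormalWord.equiv.symm_apply_apply p
  have hmem : ∀ x ∈ w.toList, ((x.2 : G)) ∉ H := by
    intro x hx hxH
    have hset : x.2 ∈ d.set x.1 := w.normalized x.1 x.2 hx
    have hne1 : x.2 ≠ 1 := w.toWord.ne_one x hx
    exact not_mem_range_of_mem_set hle d hset hne1 ⟨⟨(x.2 : G), hxH⟩, rfl⟩
  have heq : (w.head : G) * (w.toList.map fun x => ((x.2 : G))).prod = 1 := by
    have : piG A H hle p = 1 := by simp [hp]
    rw [← hw] at this
    rw [PushoutI.NormalWord.prod, map_mul, piG_base, piG_word_prod] at this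
    exact this
  cases hlist : w.toList with
  | nil =>
    have hh1 : (w.head : G) = 1 := by rw [hlist] at heq; simpa using heq
    have : w.prod = 1 := by
      rw [PushoutI.NormalWord.prod, CoprodI.Word.prod, hlist]
      have : w.head = 1 := Subtype.ext hh1
      simp [this]
    rw [hw] at this
    exact this
  | cons a rest =>
    exfalso
    have hchain := w.toWord.chain_ne
    rw [hlist] at hchain hmem
    have halt : AltList A H ((a.2 : G) :: rest.map fun x => ((x.2 : G))) := by
      refine ⟨?_, ?_⟩
      · intro z hz
        rcases List.mem_cons.1 hz with rfl | hz
        · exact ⟨⟨a.1, a.2.2⟩, hmem a (List.mem_cons_self)⟩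
        · rw [List.mem_map] at hz
          obtain ⟨x, hx, rfl⟩ := hz
          exact ⟨⟨x.1, x.2.2⟩, hmem x (List.mem_cons_of_mem _ hx)⟩
      · have := chain_srel hH (a :: rest) hchain hmem
        rwa [List.map_cons] at this
    have halt2 : AltList A H (((w.head : G) * (a.2 : G)) :: rest.map fun x => ((x.2 : G))) :=
      altList_cons_mul hle w.head.2 halt
    refine hR _ halt2 (by simp) ?_
    have : (((w.head : G) * (a.2 : G)) :: rest.map fun x => ((x.2 : G))).prod = 1 := by
      rw [List.prod_cons]
      rw [hlist, List.map_cons, List.prod_cons] at heq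
      rw [mul_assoc]
      exact heq
    rw [this]
    exact one_mem H


lemma altList_of_le {B : Bool → Subgroup G} (h1 : ∀ b, B b ≤ A b)
    (h2 : ∀ x c, (∃ b, x ∈ B b) → x ∈ A c → x ∈ B c) :
    ∀ l, AltList B H l → AltList A H l := by
  intro l
  induction l with
  | nil => intro _; exact ⟨by simp, List.isChain_nil⟩
  | cons x t ih =>
    intro hl
    have hlt := ih ⟨fun y hy => hl.1 y (List.mem_cons_of_mem _ hy), hl.2.tail⟩
    obtain ⟨⟨bx, hbx⟩, hxH⟩ := hl.1 x (List.mem_cons_self)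
    refine ⟨?_, ?_⟩
    · intro z hz
      rcases List.mem_cons.1 hz with rfl | hz
      · exact ⟨⟨bx, h1 bx hbx⟩, hxH⟩
      · exact hlt.1 z hz
    · rw [List.isChain_cons]
      refine ⟨?_, hlt.2⟩
      intro u hu
      have hut : u ∈ t := List.mem_of_mem_head? hu
      obtain ⟨⟨bu, hbu⟩, -⟩ := hl.1 u (List.mem_cons_of_mem _ hut)
      have hS : SRel B x u := (List.isChain_cons.1 hl.2).1 u hu
      rintro ⟨c, hxc, huc⟩
      exact hS ⟨c, h2 x c ⟨bx, hbx⟩ hxc, h2 u c ⟨bu, hbu⟩ huc⟩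

lemma piG_injective_of_univ (hH : A true ⊓ A false = H)
    (huniv : ∀ (Q : Type u) [Group Q], ∀ (f₁ : ↥(A true) →* Q) (f₂ : ↥(A false) →* Q),
      (∀ (x : G) (hx₁ : x ∈ A true) (hx₂ : x ∈ A false), f₁ ⟨x, hx₁⟩ = f₂ ⟨x, hx₂⟩) →
      ∃! f : ↥(⊤ : Subgroup G) →* Q,
        (∀ (x : G) (hx : x ∈ A true) (hxT : x ∈ (⊤ : Subgroup G)), f ⟨x, hxT⟩ = f₁ ⟨x, hx⟩) ∧
        (∀ (x : G) (hx : x ∈ A false) (hxT : x ∈ (⊤ : Subgroup G)), f ⟨x, hxT⟩ = f₂ ⟨x, hx⟩)) :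
    Function.Injective (piG A H hle) := by
  set πT : PushoutI (phi A H hle) →* ↥(⊤ : Subgroup G) :=
    PushoutI.lift (fun b => Subgroup.inclusion le_top) (Subgroup.inclusion le_top)
      (fun b => by ext; rfl) with hπT
  have hagree : ∀ (x : G) (hx₁ : x ∈ A true) (hx₂ : x ∈ A false),
      PushoutI.of (φ := phi A H hle) true ⟨x, hx₁⟩ =
      PushoutI.of (φ := phi A H hle) false ⟨x, hx₂⟩ := by
    intro x hx₁ hx₂
    have hxH : x ∈ H := hH ▸ Subgroup.mem_inf.2 ⟨hx₁, hx₂⟩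
    have e1 : (⟨x, hx₁⟩ : ↥(A true)) = phi A H hle true ⟨x, hxH⟩ := Subtype.ext rfl
    have e2 : (⟨x, hx₂⟩ : ↥(A false)) = phi A H hle false ⟨x, hxH⟩ := Subtype.ext rfl
    rw [e1, e2, PushoutI.of_apply_eq_base, PushoutI.of_apply_eq_base]
  obtain ⟨f, ⟨hf₁, hf₂⟩, -⟩ := huniv (PushoutI (phi A H hle))
    (PushoutI.of (φ := phi A H hle) true) (PushoutI.of (φ := phi A H hle) false) hagree
  have hid : f.comp πT = MonoidHom.id _ := by
    refine PushoutI.hom_ext_nonempty (fun b => ?_)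
    ext y
    have hy : πT (PushoutI.of b y) = Subgroup.inclusion le_top y := by
      rw [hπT, PushoutI.lift_of]
    simp only [MonoidHom.coe_comp, Function.comp_apply, MonoidHom.id_apply, hy]
    cases b
    · rw [show Subgroup.inclusion (le_top (a := A false)) y = ⟨(y : G), trivial⟩ from rfl,
        hf₂ (y : G) y.2 trivial]
    · rw [show Subgroup.inclusion (le_top (a := A true)) y = ⟨(y : G), trivial⟩ from rfl,
        hf₁ (y : G) y.2 trivial]
  have hcomm : (⊤ : Subgroup G).subtype.comp πT = piG A H hle := by
    refine PushoutI.hom_ext (fun b => ?_) ?_ <;> ext y <;> simp [hπT, piG]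
  intro p q hpq
  have h1 : πT p = πT q := by
    apply Subgroup.subtype_injective
    rw [← MonoidHom.comp_apply, ← MonoidHom.comp_apply, hcomm]
    exact hpq
  calc p = (f.comp πT) p := by rw [hid]; rfl
    _ = (f.comp πT) q := by simp only [MonoidHom.coe_comp, Function.comp_apply, h1]
    _ = q := by rw [hid]; rfl


lemma isAmalgam (hH : A true ⊓ A false = H)
    (hle : ∀ b, H ≤ A b)
    (hR : ∀ l, AltList A H l → l ≠ [] → l.prod ∉ H) :
    IsAmalgamIn ((A true).subgroupOf (A true ⊔ A false))
      ((A false).subgroupOf (A true ⊔ A false))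
      (H.subgroupOf (A true ⊔ A false)) (⊤ : Subgroup ↥(A true ⊔ A false)) := by
  set N := A true ⊔ A false with hN
  have hAN : ∀ b, A b ≤ N := by
    intro b
    cases b
    exacts [le_sup_right, le_sup_left]
  have hHN : H ≤ N := (hle true).trans (hAN true)
  set πN : PushoutI (phi A H hle) →* ↥N :=
    PushoutI.lift (fun b => Subgroup.inclusion (hAN b)) (Subgroup.inclusion hHN)
      (fun b => by ext x; rfl) with hπN
  have hcomm : N.subtype.comp πN = piG A H hle := by
    refine PushoutI.hom_ext (fun b => ?_) ?_ <;> ext y <;>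
      simp [hπN, piG]
  have hcommp : ∀ p, ((πN p : ↥N) : G) = piG A H hle p :=
    fun p => DFunLike.congr_fun hcomm p
  have hinj : Function.Injective πN := by
    intro p q h
    refine piG_injective hle hH hR ?_
    rw [← hcommp, ← hcommp, h]
  have hsurj : Function.Surjective πN := by
    intro n
    have hrange : N ≤ (piG A H hle).range := by
      rw [hN]
      refine sup_le ?_ ?_ <;> intro x hx
      · exact ⟨PushoutI.of true ⟨x, hx⟩, by simp⟩
      · exact ⟨PushoutI.of false ⟨x, hx⟩, by simp⟩
    obtain ⟨p, hp⟩ := hrange n.2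
    exact ⟨p, Subtype.ext (by rw [hcommp, hp])⟩
  set e : PushoutI (phi A H hle) ≃* ↥N := MulEquiv.ofBijective πN ⟨hinj, hsurj⟩ with he
  have hesymm : ∀ (b) (y : ↥(A b)), e.symm (Subgroup.inclusion (hAN b) y) = PushoutI.of b y := by
    intro b y
    apply e.injective
    rw [MulEquiv.apply_symm_apply]
    show Subgroup.inclusion (hAN b) y = πN (PushoutI.of b y)
    rw [hπN, PushoutI.lift_of]
  refine ⟨?_, ?_, ?_⟩
  · ext ⟨x, hx⟩
    simp only [Subgroup.mem_inf, Subgroup.mem_subgroupOf, ← hH]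
  · apply Subgroup.map_injective N.subtype_injective
    rw [Subgroup.map_sup, Subgroup.subgroupOf_map_subtype, Subgroup.subgroupOf_map_subtype,
      ← MonoidHom.range_eq_map, Subgroup.range_subtype,
      inf_of_le_left (hAN true), inf_of_le_left (hAN false)]
  · intro Q _ f₁ f₂ hagree
    set g : ∀ b, ↥(A b) →* Q := fun b => match b with
      | true => f₁.comp (Subgroup.subgroupOfEquivOfLe (hAN true)).symm.toMonoidHom
      | false => f₂.comp (Subgroup.subgroupOfEquivOfLe (hAN false)).symm.toMonoidHom
      with hg
    have hgk : ∀ b, (g b).comp (phi A H hle b) = (g true).comp (phi A H hle true) := by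
      intro b
      cases b
      · ext h
        exact (hagree ⟨(h : G), hHN h.2⟩ ((Subgroup.mem_subgroupOf).2 (hle true h.2))
          ((Subgroup.mem_subgroupOf).2 (hle false h.2))).symm
      · rfl
    set F : PushoutI (phi A H hle) →* Q := PushoutI.lift g _ hgk with hF
    set f : ↥(⊤ : Subgroup ↥N) →* Q :=
      F.comp (e.symm.toMonoidHom.comp (Subgroup.subtype ⊤)) with hf
    have hfval : ∀ (x : ↥N) (hxT : x ∈ (⊤ : Subgroup ↥N)), f ⟨x, hxT⟩ = F (e.symm x) := by
      intro x hxT; rfl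
    have hcond : ∀ (b) (x : ↥N) (hx : (x : G) ∈ A b) (hxT : x ∈ (⊤ : Subgroup ↥N)),
        f ⟨x, hxT⟩ = g b ⟨(x : G), hx⟩ := by
      intro b x hx hxT
      rw [hfval]
      have h2 : e.symm x = PushoutI.of b ⟨(x : G), hx⟩ := by
        have h3 : Subgroup.inclusion (hAN b) ⟨(x : G), hx⟩ = x := Subtype.ext rfl
        rw [← hesymm b ⟨(x : G), hx⟩]
        exact congrArg e.symm h3.symm
      rw [h2, hF, PushoutI.lift_of]
    refine ⟨f, ⟨?_, ?_⟩, ?_⟩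
    · intro x hx hxT
      rw [hcond true x ((Subgroup.mem_subgroupOf).1 hx) hxT]
      exact congrArg f₁ (Subtype.ext (Subtype.ext rfl))
    · intro x hx hxT
      rw [hcond false x ((Subgroup.mem_subgroupOf).1 hx) hxT]
      exact congrArg f₂ (Subtype.ext (Subtype.ext rfl))
    · intro f' hf'
      set j : ↥N →* ↥(⊤ : Subgroup ↥N) := (Subgroup.topEquiv (G := ↥N)).symm.toMonoidHom with hj
      have key : f'.comp (j.comp ((MulEquiv.toMonoidHom e).comp (MonoidHom.id _))) = F := by
        refine PushoutI.hom_ext_nonempty (fun b => ?_)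
        ext y
        have he1 : e (PushoutI.of b y) = Subgroup.inclusion (hAN b) y := by
          show πN (PushoutI.of b y) = _
          rw [hπN, PushoutI.lift_of]
        simp only [MonoidHom.coe_comp, Function.comp_apply, MonoidHom.id_apply,
          MulEquiv.coe_toMonoidHom, he1, hF, PushoutI.lift_of]
        cases b
        · have := hf'.2 (Subgroup.inclusion (hAN false) y)
            ((Subgroup.mem_subgroupOf).2 y.2) (Subgroup.mem_top _)
          rw [show j (Subgroup.inclusion (hAN false) y) =
            ⟨Subgroup.inclusion (hAN false) y, Subgroup.mem_top _⟩ from rfl, this]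
          exact congrArg f₂ (Subtype.ext (Subtype.ext rfl))
        · have := hf'.1 (Subgroup.inclusion (hAN true) y)
            ((Subgroup.mem_subgroupOf).2 y.2) (Subgroup.mem_top _)
          rw [show j (Subgroup.inclusion (hAN true) y) =
            ⟨Subgroup.inclusion (hAN true) y, Subgroup.mem_top _⟩ from rfl, this]
          exact congrArg f₁ (Subtype.ext (Subtype.ext rfl))
      ext z
      obtain ⟨x, hxT⟩ := z
      have h1 : j (e (e.symm x)) = (⟨x, hxT⟩ : ↥(⊤ : Subgroup ↥N)) := by
        rw [MulEquiv.apply_symm_apply]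
        rfl
      calc f' ⟨x, hxT⟩ = f' (j (e (e.symm x))) := by rw [h1]
        _ = F (e.symm x) := DFunLike.congr_fun key (e.symm x)
        _ = f ⟨x, hxT⟩ := (hfval x hxT).symm


end Stmt5Aux

open Stmt5Aux in
theorem stmt5 {G : Type u} [Group G] (G₁ G₂ H H₀ : Subgroup G)
    (hG : IsAmalgamIn G₁ G₂ H ⊤)
    (hH₀ : H₀ ≤ H)
    (hcond : ∀ x : G, (x ∈ G₁ ∨ x ∈ G₂) →
      Subgroup.map (MulAut.conj x).toMonoidHom H₀ ≤ H →
      Subgroup.map (MulAut.conj x).toMonoidHom H₀ = H₀) :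
    H ≤ (Subgroup.normalizer (H₀ : Set G)) ∧
    (Subgroup.normalizer (H₀ : Set G)) = (G₁ ⊓ (Subgroup.normalizer (H₀ : Set G))) ⊔ (G₂ ⊓ (Subgroup.normalizer (H₀ : Set G))) ∧
    IsAmalgamIn ((G₁ ⊓ (Subgroup.normalizer (H₀ : Set G))).subgroupOf (Subgroup.normalizer (H₀ : Set G)))
      ((G₂ ⊓ (Subgroup.normalizer (H₀ : Set G))).subgroupOf (Subgroup.normalizer (H₀ : Set G)))
      (H.subgroupOf (Subgroup.normalizer (H₀ : Set G))) (⊤ : Subgroup ↥(Subgroup.normalizer (H₀ : Set G))) := by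
  classical
  obtain ⟨hGinf, hGsup, hGuniv⟩ := hG
  set A : Bool → Subgroup G := fun b => bif b then G₁ else G₂ with hA
  have hH : A true ⊓ A false = H := hGinf
  have hle : ∀ b, H ≤ A b := by
    intro b
    cases b
    · exact hH ▸ inf_le_right
    · exact hH ▸ inf_le_left
  have hinj : Function.Injective (piG A H hle) :=
    piG_injective_of_univ hle hH hGuniv
  have hR : ∀ l, AltList A H l → l ≠ [] → l.prod ∉ H :=
    prod_not_mem A H hle hinj
  have hnorm : ∀ x : G, (∃ b, x ∈ A b) → (∀ n ∈ H₀, x * n * x⁻¹ ∈ H) →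
      x ∈ (Subgroup.normalizer (H₀ : Set G)) := by
    intro x hb hcnd
    have hor : x ∈ G₁ ∨ x ∈ G₂ := by
      rcases hb with ⟨b, hbx⟩
      cases b
      · exact Or.inr hbx
      · exact Or.inl hbx
    have hmaple : Subgroup.map (MulAut.conj x).toMonoidHom H₀ ≤ H := by
      intro y hy
      rw [Subgroup.mem_map] at hy
      obtain ⟨n, hn, rfl⟩ := hy
      have h1 : ((MulAut.conj x).toMonoidHom n : G) = x * n * x⁻¹ := rfl
      rw [h1]
      exact hcnd n hn
    have heq := hcond x hor hmaple
    rw [Subgroup.mem_normalizer_iff]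
    intro h
    constructor
    · intro hh
      rw [← heq]
      exact Subgroup.mem_map.2 ⟨h, hh, rfl⟩
    · intro hh
      rw [← heq, Subgroup.mem_map] at hh
      obtain ⟨n, hn, hne⟩ := hh
      have h1 : x * n * x⁻¹ = x * h * x⁻¹ := hne
      have h2 : n = h := mul_left_cancel (mul_right_cancel h1)
      exact h2 ▸ hn
  have part1 : H ≤ (Subgroup.normalizer (H₀ : Set G)) := by
    intro h hh
    refine hnorm h ⟨true, hle true hh⟩ ?_
    intro n hn
    have h1 : h * n * h⁻¹ ∈ G₁ :=
      mul_mem (mul_mem (hle true hh) (hle true (hH₀ hn))) (inv_mem (hle true hh))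
    have h2 : h * n * h⁻¹ ∈ G₂ :=
      mul_mem (mul_mem (hle false hh) (hle false (hH₀ hn))) (inv_mem (hle false hh))
    exact hGinf ▸ Subgroup.mem_inf.2 ⟨h1, h2⟩
  have part2 : (Subgroup.normalizer (H₀ : Set G)) = (G₁ ⊓ (Subgroup.normalizer (H₀ : Set G))) ⊔ (G₂ ⊓ (Subgroup.normalizer (H₀ : Set G))) := by
    apply le_antisymm
    · intro g hg
      have hgT : g ∈ A true ⊔ A false := by
        have h1 : g ∈ (⊤ : Subgroup G) := trivial
        rw [← hGsup] at h1
        exact h1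
      rcases exists_decomp hH hle g hgT with hgH | ⟨l, hl, hne, rfl⟩
      · exact Subgroup.mem_sup_left ⟨hle true hgH, hg⟩
      · refine norm_lemma hH hle hR hH₀ hnorm l hl ?_
        intro n hn
        have h1 : l.prod⁻¹ ∈ (Subgroup.normalizer (H₀ : Set G)) := inv_mem hg
        have h2 := (Subgroup.mem_normalizer_iff.1 h1 n).1 hn
        refine hH₀ ?_
        simpa using h2
    · exact sup_le inf_le_right inf_le_right
  refine ⟨part1, part2, ?_⟩
  set B : Bool → Subgroup G :=
    fun b => bif b then G₁ ⊓ (Subgroup.normalizer (H₀ : Set G)) else G₂ ⊓ (Subgroup.normalizer (H₀ : Set G)) with hB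
  have hHB : B true ⊓ B false = H := by
    show (G₁ ⊓ (Subgroup.normalizer (H₀ : Set G))) ⊓ (G₂ ⊓ (Subgroup.normalizer (H₀ : Set G))) = H
    rw [inf_inf_inf_comm, hGinf, inf_idem]
    exact inf_eq_left.2 part1
  have hleB : ∀ b, H ≤ B b := by
    intro b
    cases b
    · exact le_inf (hle false) part1
    · exact le_inf (hle true) part1
  have hRB : ∀ l, AltList B H l → l ≠ [] → l.prod ∉ H := by
    intro l hl hne
    refine hR l ?_ hne
    refine altList_of_le (B := B) ?_ ?_ l hl
    · intro b
      cases b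
      · exact inf_le_left
      · exact inf_le_left
    · intro x c hx hxc
      have hxn : x ∈ (Subgroup.normalizer (H₀ : Set G)) := by
        rcases hx with ⟨b, hxb⟩
        cases b
        · exact hxb.2
        · exact hxb.2
      cases c
      · exact ⟨hxc, hxn⟩
      · exact ⟨hxc, hxn⟩
  have hiso := isAmalgam hHB hleB hRB
  have hiso' : IsAmalgamIn
      ((G₁ ⊓ (Subgroup.normalizer (H₀ : Set G))).subgroupOf ((G₁ ⊓ (Subgroup.normalizer (H₀ : Set G))) ⊔ (G₂ ⊓ (Subgroup.normalizer (H₀ : Set G)))))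
      ((G₂ ⊓ (Subgroup.normalizer (H₀ : Set G))).subgroupOf ((G₁ ⊓ (Subgroup.normalizer (H₀ : Set G))) ⊔ (G₂ ⊓ (Subgroup.normalizer (H₀ : Set G)))))
      (H.subgroupOf ((G₁ ⊓ (Subgroup.normalizer (H₀ : Set G))) ⊔ (G₂ ⊓ (Subgroup.normalizer (H₀ : Set G)))))
      (⊤ : Subgroup ↥((G₁ ⊓ (Subgroup.normalizer (H₀ : Set G))) ⊔ (G₂ ⊓ (Subgroup.normalizer (H₀ : Set G))))) := hiso
  rw [← part2] at hiso'
  exact hiso'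
end

section
/- If g ∈ L normalizes A (i.e., gAg⁻¹ = A), then g ∈ K. -/
universe u

namespace Stmt9Aux

variable {L : Type u} [Group L]

/-- A "letter" for reduced words: an element of `E ∪ K` not in `Z`. -/
def Lt (E K Z : Subgroup L) (y : L) : Prop := (y ∈ E ∨ y ∈ K) ∧ y ∉ Z

/-- Adjacent letters must come from different factors. -/
def Adj (E K : Subgroup L) (u v : L) : Prop := ¬(u ∈ E ∧ v ∈ E) ∧ ¬(u ∈ K ∧ v ∈ K)

/-- Reduced (alternating) words. -/
def Alt (E K Z : Subgroup L) (l : List L) : Prop :=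
  (∀ y ∈ l, Lt E K Z y) ∧ l.Chain' (Adj E K)

theorem Lt.inv {E K Z : Subgroup L} {y : L} (h : Lt E K Z y) : Lt E K Z y⁻¹ :=
  ⟨h.1.imp (fun h' => inv_mem h') (fun h' => inv_mem h'),
    fun hz => h.2 (by simpa using inv_mem hz)⟩

theorem alt_comm {E K Z : Subgroup L} {l : List L} (h : Alt E K Z l) : Alt K E Z l :=
  ⟨fun y hy => ⟨(h.1 y hy).1.symm, (h.1 y hy).2⟩,
    h.2.imp fun _ _ huv => ⟨huv.2, huv.1⟩⟩

/-- The two factors, indexed by `Bool`. -/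
abbrev Fac (E K : Subgroup L) : Bool → Type u := fun b =>
  Bool.rec (motive := fun _ => Type u) (↥K) (↥E) b

instance (E K : Subgroup L) (b : Bool) : Group (Fac E K b) :=
  Bool.rec (motive := fun b => Group (Fac E K b))
    (inferInstanceAs (Group ↥K)) (inferInstanceAs (Group ↥E)) b

/-- The diagram maps from the base `Z`. -/
abbrev fmap (E K Z : Subgroup L) (hZE : Z ≤ E) (hZK : Z ≤ K) :
    ∀ b, ↥Z →* Fac E K b := fun b =>
  Bool.rec (motive := fun b => ↥Z →* Fac E K b)
    (Subgroup.inclusion hZK) (Subgroup.inclusion hZE) b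

/-- The key "normal form" fact: the product of a nonempty reduced word is not in `Z`. -/
theorem prod_not_mem {E K Z : Subgroup L} (hEK : E ⊓ K = Z)
    (hAm : IsAmalgamIn E K Z ⊤) :
    ∀ l : List L, Alt E K Z l → l ≠ [] → l.prod ∉ Z := by
  have hZE : Z ≤ E := hEK ▸ inf_le_left
  have hZK : Z ≤ K := hEK ▸ inf_le_right
  set φ := fmap E K Z hZE hZK with hφdef
  have hφinj : ∀ b, Function.Injective (φ b) := by
    intro b
    cases b
    · exact Subgroup.inclusion_injective hZK
    · exact Subgroup.inclusion_injective hZE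
  have hcompat : ∀ (x : L) (hx₁ : x ∈ E) (hx₂ : x ∈ K),
      (Monoid.PushoutI.of (φ := φ) true) ⟨x, hx₁⟩
        = (Monoid.PushoutI.of (φ := φ) false) ⟨x, hx₂⟩ := by
    intro x hx1 hx2
    have hxZ : x ∈ Z := hEK ▸ ⟨hx1, hx2⟩
    have e1 : Monoid.PushoutI.of (φ := φ) true ⟨x, hx1⟩
        = Monoid.PushoutI.base φ ⟨x, hxZ⟩ :=
      Monoid.PushoutI.of_apply_eq_base φ true ⟨x, hxZ⟩
    have e2 : Monoid.PushoutI.of (φ := φ) false ⟨x, hx2⟩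
        = Monoid.PushoutI.base φ ⟨x, hxZ⟩ :=
      Monoid.PushoutI.of_apply_eq_base φ false ⟨x, hxZ⟩
    exact e1.trans e2.symm
  obtain ⟨f, ⟨hfE, hfK⟩, -⟩ := hAm.2.2 (Monoid.PushoutI φ)
    (Monoid.PushoutI.of (φ := φ) true) (Monoid.PushoutI.of (φ := φ) false) hcompat
  have key : ∀ l : List L, Alt E K Z l →
      ∃ w : Monoid.CoprodI.Word (Fac E K),
        Monoid.PushoutI.ofCoprodI (φ := φ) w.prod = f ⟨l.prod, Subgroup.mem_top _⟩ ∧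
        Monoid.PushoutI.Reduced φ w ∧
        w.toList.length = l.length ∧
        ∀ y : L, l.head? = some y →
          ((y ∈ E → w.fstIdx = some true) ∧ (y ∉ E → w.fstIdx = some false)) := by
    intro l
    induction l with
    | nil =>
      intro _
      refine ⟨Monoid.CoprodI.Word.empty, ?_, ?_, rfl, ?_⟩
      · have h1 : (⟨List.prod [], Subgroup.mem_top _⟩ : ↥(⊤ : Subgroup L)) = 1 := rfl
        rw [h1, map_one]
        simp
      · intro p hp
        simp [Monoid.CoprodI.Word.empty] at hp
      · intro y hy
        simp at hy
    | cons y l ih =>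
      intro hAlt
      have hLt : Lt E K Z y := hAlt.1 y (List.mem_cons_self)
      have hAlt' : Alt E K Z l :=
        ⟨fun w hw => hAlt.1 w (List.mem_cons_of_mem _ hw), hAlt.2.tail⟩
      obtain ⟨w, hwprod, hwred, hwlen, hwidx⟩ := ih hAlt'
      have hadj : ∀ z : L, l.head? = some z → Adj E K y z := by
        intro z hz
        exact (List.isChain_cons.1 hAlt.2).1 z hz
      have hy1 : y ≠ 1 := fun h => hLt.2 (h ▸ one_mem Z)
      have hsubt : (⟨(y :: l).prod, Subgroup.mem_top _⟩ : ↥(⊤ : Subgroup L))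
          = ⟨y, Subgroup.mem_top _⟩ * ⟨l.prod, Subgroup.mem_top _⟩ :=
        Subtype.ext (List.prod_cons)
      by_cases hyE : y ∈ E
      · have hfst : w.fstIdx ≠ some true := by
          cases hhead : l.head? with
          | none =>
            have hl0 : l = [] := List.head?_eq_none_iff.1 hhead
            have hnil : w.toList = [] := List.length_eq_zero_iff.1 (by rw [hwlen, hl0]; rfl)
            simp [Monoid.CoprodI.Word.fstIdx, hnil]
          | some z =>
            have hzE : z ∉ E := fun hzE' => (hadj z hhead).1 ⟨hyE, hzE'⟩
            rw [(hwidx z hhead).2 hzE]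
            simp
        have hne1 : ∀ q ∈ ((⟨true, (⟨y, hyE⟩ : ↥E)⟩ : Σ b, Fac E K b) :: w.toList),
            Sigma.snd q ≠ 1 := by
          rintro q hq
          rcases List.mem_cons.1 hq with rfl | hq
          · exact fun h => hy1 (congrArg Subtype.val h)
          · exact w.ne_one q hq
        have hch1 : List.Chain' (fun q r => Sigma.fst q ≠ Sigma.fst r)
            ((⟨true, (⟨y, hyE⟩ : ↥E)⟩ : Σ b, Fac E K b) :: w.toList) := by
          refine List.isChain_cons.2 ⟨?_, w.chain_ne⟩
          intro q hq heq
          exact hfst (by rw [Monoid.CoprodI.Word.fstIdx, Option.mem_def.1 hq]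
                         simp [← heq])
        refine ⟨⟨_, hne1, hch1⟩, ?_, ?_, ?_, ?_⟩
        · have hps : Monoid.CoprodI.Word.prod
              (⟨_, hne1, hch1⟩ : Monoid.CoprodI.Word (Fac E K))
              = Monoid.CoprodI.of (M := Fac E K) (i := true) ⟨y, hyE⟩ * w.prod := by
            simp [Monoid.CoprodI.Word.prod]
          rw [hps, map_mul, Monoid.PushoutI.ofCoprodI_of, hwprod, hsubt, map_mul,
            hfE y hyE (Subgroup.mem_top _)]
        · intro p hp
          rcases List.mem_cons.1 hp with rfl | hp
          · intro hmem
            obtain ⟨zz, hzz⟩ := MonoidHom.mem_range.1 hmem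
            exact hLt.2 (by rw [← show (zz : L) = y from congrArg Subtype.val hzz]; exact zz.2)
          · exact hwred p hp
        · simp [hwlen]
        · intro y' hy'
          obtain rfl : y = y' := Option.some.inj hy'
          exact ⟨fun _ => rfl, fun h => absurd hyE h⟩
      · have hyK : y ∈ K := hLt.1.resolve_left hyE
        have hfst : w.fstIdx ≠ some false := by
          cases hhead : l.head? with
          | none =>
            have hl0 : l = [] := List.head?_eq_none_iff.1 hhead
            have hnil : w.toList = [] := List.length_eq_zero_iff.1 (by rw [hwlen, hl0]; rfl)
            simp [Monoid.CoprodI.Word.fstIdx, hnil]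
          | some z =>
            have hzK : z ∉ K := fun hzK' => (hadj z hhead).2 ⟨hyK, hzK'⟩
            have hzE : z ∈ E := by
              have := hAlt'.1 z (by
                have : l ≠ [] := fun h => by rw [h] at hhead; cases hhead
                exact List.mem_of_mem_head? (by rw [hhead]; rfl))
              exact this.1.resolve_right hzK
            rw [(hwidx z hhead).1 hzE]
            simp
        have hne1 : ∀ q ∈ ((⟨false, (⟨y, hyK⟩ : ↥K)⟩ : Σ b, Fac E K b) :: w.toList),
            Sigma.snd q ≠ 1 := by
          rintro q hq
          rcases List.mem_cons.1 hq with rfl | hq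
          · exact fun h => hy1 (congrArg Subtype.val h)
          · exact w.ne_one q hq
        have hch1 : List.Chain' (fun q r => Sigma.fst q ≠ Sigma.fst r)
            ((⟨false, (⟨y, hyK⟩ : ↥K)⟩ : Σ b, Fac E K b) :: w.toList) := by
          refine List.isChain_cons.2 ⟨?_, w.chain_ne⟩
          intro q hq heq
          exact hfst (by rw [Monoid.CoprodI.Word.fstIdx, Option.mem_def.1 hq]
                         simp [← heq])
        refine ⟨⟨_, hne1, hch1⟩, ?_, ?_, ?_, ?_⟩
        · have hps : Monoid.CoprodI.Word.prod
              (⟨_, hne1, hch1⟩ : Monoid.CoprodI.Word (Fac E K))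
              = Monoid.CoprodI.of (M := Fac E K) (i := false) ⟨y, hyK⟩ * w.prod := by
            simp [Monoid.CoprodI.Word.prod]
          rw [hps, map_mul, Monoid.PushoutI.ofCoprodI_of, hwprod, hsubt, map_mul,
            hfK y hyK (Subgroup.mem_top _)]
        · intro p hp
          rcases List.mem_cons.1 hp with rfl | hp
          · intro hmem
            obtain ⟨zz, hzz⟩ := MonoidHom.mem_range.1 hmem
            exact hLt.2 (by rw [← show (zz : L) = y from congrArg Subtype.val hzz]; exact zz.2)
          · exact hwred p hp
        · simp [hwlen]
        · intro y' hy'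
          obtain rfl : y = y' := Option.some.inj hy'
          exact ⟨fun h => absurd h hyE, fun _ => rfl⟩
  intro l hl hne hprodZ
  obtain ⟨w, hwprod, hwred, hwlen, -⟩ := key l hl
  have hbase : Monoid.PushoutI.ofCoprodI (φ := φ) w.prod
      ∈ (Monoid.PushoutI.base φ).range := by
    rw [hwprod]
    refine MonoidHom.mem_range.2 ⟨⟨l.prod, hprodZ⟩, ?_⟩
    rw [hfE l.prod (hZE hprodZ) (Subgroup.mem_top _)]
    exact (Monoid.PushoutI.of_apply_eq_base φ true ⟨l.prod, hprodZ⟩).symm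
  have hempty := Monoid.PushoutI.Reduced.eq_empty_of_mem_range hφinj hwred hbase
  exact hne (List.length_eq_zero_iff.1 (by rw [← hwlen, hempty]; rfl))

/-- A reduced word starting and ending with a letter from `E` has product outside `K`. -/
theorem prod_not_mem_K {E K Z : Subgroup L} (hEK : E ⊓ K = Z)
    (hAm : IsAmalgamIn E K Z ⊤) {m : List L} (hm : Alt E K Z m) {gf gl : L}
    (h1 : m.head? = some gf) (h2 : m.getLast? = some gl)
    (hgf : gf ∈ E) (hgl : gl ∈ E) : m.prod ∉ K := by
  intro hs
  have hne : m ≠ [] := by rintro rfl; simp at h1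
  have hsZ : m.prod ∉ Z := prod_not_mem hEK hAm m hm hne
  have hglZ : gl ∉ Z := (hm.1 gl (List.mem_of_getLast? h2)).2
  have hAlt2 : Alt E K Z (m ++ [m.prod⁻¹]) := by
    constructor
    · intro w hw
      rcases List.mem_append.1 hw with hw | hw
      · exact hm.1 w hw
      · rw [List.mem_singleton] at hw
        subst hw
        exact ⟨Or.inr (inv_mem hs), fun hzz => hsZ (by simpa using inv_mem hzz)⟩
    · rw [List.Chain', List.isChain_append]
      refine ⟨hm.2, List.isChain_singleton _, ?_⟩
      intro u hu v hv
      have hu' : u = gl := Option.some.inj ((Option.mem_def.1 hu).symm.trans h2)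
      have hv' : m.prod⁻¹ = v := by simpa using hv
      subst hu'
      subst hv'
      exact ⟨fun hc => hsZ (hEK ▸ ⟨(Subgroup.inv_mem_iff _).1 hc.2, hs⟩),
             fun hc => hglZ (hEK ▸ ⟨hgl, hc.1⟩)⟩
  have hcon := prod_not_mem hEK hAm (m ++ [m.prod⁻¹]) hAlt2 (by simp)
  apply hcon
  rw [List.prod_append, List.prod_singleton, mul_inv_cancel]
  exact one_mem Z

theorem mirror_prod (l : List L) (x : L) :
    (l ++ x :: (l.reverse.map fun z => z⁻¹)).prod = l.prod * x * l.prod⁻¹ := by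
  rw [List.prod_append, List.prod_cons, List.map_reverse, ← List.prod_inv_reverse, mul_assoc]

theorem mirror_alt {E K Z : Subgroup L} (hEK : E ⊓ K = Z) {l : List L}
    (hl : Alt E K Z l) {x : L} (hx : x ∈ K) (hxZ : x ∉ Z)
    (hlast : ∀ y : L, l.getLast? = some y → y ∈ E) :
    Alt E K Z (l ++ x :: (l.reverse.map fun z => z⁻¹)) := by
  have hxE : x ∉ E := fun h => hxZ (hEK ▸ ⟨h, hx⟩)
  constructor
  · intro y hy
    rcases List.mem_append.1 hy with hy | hy
    · exact hl.1 y hy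
    · rcases List.mem_cons.1 hy with rfl | hy
      · exact ⟨Or.inr hx, hxZ⟩
      · rcases List.mem_map.1 hy with ⟨z, hz, rfl⟩
        exact (hl.1 z (List.mem_reverse.1 hz)).inv
  · rw [List.Chain', List.isChain_append]
    refine ⟨hl.2, ?_, ?_⟩
    · rw [List.isChain_cons]
      constructor
      · intro u hu
        rw [List.head?_map, List.head?_reverse] at hu
        obtain ⟨y, hy, rfl⟩ := Option.map_eq_some_iff.1 (Option.mem_def.1 hu)
        have hyE : y ∈ E := hlast y hy
        have hyZ : y ∉ Z := (hl.1 y (List.mem_of_getLast? hy)).2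
        exact ⟨fun h => hxE h.1, fun h => hyZ (hEK ▸ ⟨hyE, (Subgroup.inv_mem_iff _).1 h.2⟩)⟩
      · rw [List.isChain_map, List.isChain_reverse]
        exact hl.2.imp fun u v huv =>
          ⟨fun h => huv.1 ⟨(Subgroup.inv_mem_iff _).1 h.2, (Subgroup.inv_mem_iff _).1 h.1⟩,
           fun h => huv.2 ⟨(Subgroup.inv_mem_iff _).1 h.2, (Subgroup.inv_mem_iff _).1 h.1⟩⟩
    · intro u hu v hv
      have hv' : x = v := by simpa using hv
      subst hv'
      have huE : u ∈ E := hlast u (Option.mem_def.1 hu)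
      have huZ : u ∉ Z := (hl.1 u (List.mem_of_getLast? (Option.mem_def.1 hu))).2
      exact ⟨fun h => hxE h.2, fun h => huZ (hEK ▸ ⟨huE, h.1⟩)⟩

theorem mirror_head {l : List L} (x g₁ : L) (h : l.head? = some g₁) :
    (l ++ x :: (l.reverse.map fun z => z⁻¹)).head? = some g₁ := by
  cases l with
  | nil => simp at h
  | cons a t => simpa using h

theorem mirror_getLast {l : List L} (x g₁ : L) (h : l.head? = some g₁) :
    (l ++ x :: (l.reverse.map fun z => z⁻¹)).getLast? = some g₁⁻¹ := by
  have hrev : (l.reverse.map fun z => z⁻¹).reverse = l.map fun z => z⁻¹ := by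
    rw [List.map_reverse, List.reverse_reverse]
  have h1 : (x :: (l.reverse.map fun z => z⁻¹)).getLast? = some g₁⁻¹ := by
    rw [← List.head?_reverse, List.reverse_cons, hrev]
    cases l with
    | nil => simp at h
    | cons a t =>
      obtain rfl : a = g₁ := by simpa using h
      simp
  rw [List.getLast?_append, h1]
  rfl

/-- Main induction: a conjugator of a nontrivial torsion element of `K` back into `K`
lies in `K`. -/
theorem main_conj {E K Z : Subgroup L} (hEK : E ⊓ K = Z)
    (hAm : IsAmalgamIn E K Z ⊤)
    (hZtf : ∀ z ∈ Z, IsOfFinOrder z → z = 1) :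
    ∀ l : List L, Alt E K Z l → ∀ x : L, x ∈ K → IsOfFinOrder x → x ≠ 1 →
      l.prod * x * l.prod⁻¹ ∈ K → l.prod ∈ K := by
  intro l
  induction l using List.reverseRecOn with
  | nil =>
    intro _ x _ _ _ _
    simpa using one_mem K
  | append_singleton l gn ih =>
    intro hAlt x hxK hxfin hx1 hconj
    have hxZ : x ∉ Z := fun h => hx1 (hZtf x h hxfin)
    have hAltl : Alt E K Z l :=
      ⟨fun w hw => hAlt.1 w (List.mem_append_left _ hw), (List.isChain_append.1 hAlt.2).1⟩
    have hLtg : Lt E K Z gn := hAlt.1 gn (List.mem_append_right _ (List.mem_singleton_self gn))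
    rw [List.prod_append, List.prod_singleton] at hconj ⊢
    by_cases hgK : gn ∈ K
    · have hy : gn * x * gn⁻¹ ∈ K := mul_mem (mul_mem hgK hxK) (inv_mem hgK)
      have hyfin : IsOfFinOrder (gn * x * gn⁻¹) := by
        obtain ⟨n, hn, hpow⟩ := isOfFinOrder_iff_pow_eq_one.1 hxfin
        exact isOfFinOrder_iff_pow_eq_one.2
          ⟨n, hn, by rw [conj_pow, hpow, mul_one, mul_inv_cancel]⟩
      have hy1 : gn * x * gn⁻¹ ≠ 1 := by
        intro h
        apply hx1
        have h2 := congrArg (fun t => gn⁻¹ * t * gn) h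
        simpa [mul_assoc] using h2
      have hKy : l.prod * (gn * x * gn⁻¹) * l.prod⁻¹ ∈ K := by
        have heq : l.prod * (gn * x * gn⁻¹) * l.prod⁻¹
            = l.prod * gn * x * (l.prod * gn)⁻¹ := by group
        rw [heq]
        exact hconj
      exact mul_mem (ih hAltl (gn * x * gn⁻¹) hy hyfin hy1 hKy) hgK
    · have hgE : gn ∈ E := hLtg.1.resolve_right hgK
      exfalso
      cases l with
      | nil =>
        have hAlt1 : Alt E K Z [gn] := by
          constructor
          · intro w hw
            rw [List.mem_singleton] at hw
            subst hw
            exact hLtg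
          · exact List.isChain_singleton _
        have hlast1 : ∀ y : L, ([gn] : List L).getLast? = some y → y ∈ E := by
          intro y hy
          obtain rfl : gn = y := by simpa using hy
          exact hgE
        have hm := mirror_alt hEK hAlt1 hxK hxZ hlast1
        refine prod_not_mem_K hEK hAm hm (mirror_head x gn rfl) (mirror_getLast x gn rfl)
          hgE (inv_mem hgE) ?_
        rw [mirror_prod]
        simpa using hconj
      | cons g₁ l' =>
        have hLt1 : Lt E K Z g₁ := hAltl.1 g₁ (List.mem_cons_self)
        rw [List.cons_append] at hAlt
        by_cases hg1K : g₁ ∈ K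
        · -- peel off the first letter
          have hAlt1 : Alt E K Z (l' ++ [gn]) :=
            ⟨fun w hw => hAlt.1 w (List.mem_cons_of_mem _ hw), hAlt.2.tail⟩
          obtain ⟨h₁, hh₁, hh₁E⟩ : ∃ h₁ : L, (l' ++ [gn]).head? = some h₁ ∧ h₁ ∈ E := by
            cases l' with
            | nil => exact ⟨gn, rfl, hgE⟩
            | cons g₂ t =>
              have hadj : Adj E K g₁ g₂ := (List.isChain_cons.1 hAlt.2).1 g₂ rfl
              have hg₂ : Lt E K Z g₂ := hAlt1.1 g₂ (List.mem_cons_self)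
              exact ⟨g₂, rfl, hg₂.1.resolve_right (fun hk => hadj.2 ⟨hg1K, hk⟩)⟩
          have hlast1 : ∀ y : L, (l' ++ [gn]).getLast? = some y → y ∈ E := by
            intro y hy
            rw [List.getLast?_concat] at hy
            obtain rfl : gn = y := Option.some.inj hy
            exact hgE
          have hm := mirror_alt hEK hAlt1 hxK hxZ hlast1
          refine prod_not_mem_K hEK hAm hm (mirror_head x h₁ hh₁) (mirror_getLast x h₁ hh₁)
            hh₁E (inv_mem hh₁E) ?_
          rw [mirror_prod]
          have heq : (l' ++ [gn]).prod * x * (l' ++ [gn]).prod⁻¹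
              = g₁⁻¹ * ((g₁ :: l').prod * gn * x * ((g₁ :: l').prod * gn)⁻¹) * g₁ := by
            rw [List.prod_append, List.prod_singleton, List.prod_cons]
            group
          rw [heq]
          exact mul_mem (mul_mem (inv_mem hg1K) hconj) hg1K
        · have hg1E : g₁ ∈ E := hLt1.1.resolve_right hg1K
          rw [← List.cons_append] at hAlt
          have hlast1 : ∀ y : L, ((g₁ :: l') ++ [gn]).getLast? = some y → y ∈ E := by
            intro y hy
            rw [List.getLast?_concat] at hy
            obtain rfl : gn = y := Option.some.inj hy
            exact hgE
          have hm := mirror_alt hEK hAlt hxK hxZ hlast1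
          refine prod_not_mem_K hEK hAm hm (mirror_head x g₁ rfl) (mirror_getLast x g₁ rfl)
            hg1E (inv_mem hg1E) ?_
          rw [mirror_prod, List.prod_append, List.prod_singleton]
          exact hconj

theorem rep_mul_left {E K Z : Subgroup L} (hEK : E ⊓ K = Z) {x g : L} (hx : x ∈ E)
    (h : ∃ z l, z ∈ Z ∧ Alt E K Z l ∧ g = z * l.prod) :
    ∃ z l, z ∈ Z ∧ Alt E K Z l ∧ x * g = z * l.prod := by
  have hZE : Z ≤ E := hEK ▸ inf_le_left
  obtain ⟨z, l, hz, hAlt, rfl⟩ := h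
  have hxz : x * z ∈ E := mul_mem hx (hZE hz)
  by_cases h1 : x * z ∈ Z
  · exact ⟨x * z, l, h1, hAlt, by rw [mul_assoc]⟩
  cases l with
  | nil =>
    refine ⟨1, [x * z], one_mem _, ⟨?_, List.isChain_singleton _⟩, by simp [mul_assoc]⟩
    intro y hy
    rw [List.mem_singleton] at hy
    subst hy
    exact ⟨Or.inl hxz, h1⟩
  | cons y l' =>
    have hLty : Lt E K Z y := hAlt.1 y (List.mem_cons_self)
    have htail : Alt E K Z l' :=
      ⟨fun w hw => hAlt.1 w (List.mem_cons_of_mem _ hw), hAlt.2.tail⟩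
    have hheadAdj : ∀ w : L, w ∈ l'.head? → Adj E K y w := (List.isChain_cons.1 hAlt.2).1
    by_cases hyE : y ∈ E
    · have huE : x * z * y ∈ E := mul_mem hxz hyE
      by_cases huZ : x * z * y ∈ Z
      · exact ⟨x * z * y, l', huZ, htail, by simp [List.prod_cons, mul_assoc]⟩
      · refine ⟨1, (x * z * y) :: l', one_mem _, ⟨?_, ?_⟩, ?_⟩
        · intro w hw
          rcases List.mem_cons.1 hw with rfl | hw
          · exact ⟨Or.inl huE, huZ⟩
          · exact htail.1 w hw
        · rw [List.Chain', List.isChain_cons]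
          refine ⟨?_, htail.2⟩
          intro w hw
          have hyw := hheadAdj w hw
          have hwE : w ∉ E := fun hwE' => hyw.1 ⟨hyE, hwE'⟩
          exact ⟨fun hc => hwE hc.2, fun hc => huZ (hEK ▸ ⟨huE, hc.1⟩)⟩
        · simp [List.prod_cons, mul_assoc]
    · have hyK : y ∈ K := hLty.1.resolve_left hyE
      refine ⟨1, (x * z) :: y :: l', one_mem _, ⟨?_, ?_⟩, ?_⟩
      · intro w hw
        rcases List.mem_cons.1 hw with rfl | hw
        · exact ⟨Or.inl hxz, h1⟩
        · exact hAlt.1 w hw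
      · rw [List.Chain', List.isChain_cons]
        refine ⟨?_, hAlt.2⟩
        intro w hw
        have hwy : y = w := by simpa using hw
        subst hwy
        exact ⟨fun hc => hyE hc.2, fun hc => h1 (hEK ▸ ⟨hxz, hc.1⟩)⟩
      · simp [List.prod_cons, mul_assoc]

theorem exists_rep {E K Z : Subgroup L} (hEK : E ⊓ K = Z) (htop : E ⊔ K = ⊤) (g : L) :
    ∃ z l, z ∈ Z ∧ Alt E K Z l ∧ g = z * l.prod := by
  have hEK' : K ⊓ E = Z := by rw [inf_comm]; exact hEK
  have hg : g ∈ Subgroup.closure ((E : Set L) ∪ (K : Set L)) := by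
    rw [← Subgroup.sup_eq_closure, htop]
    trivial
  induction hg using Subgroup.closure_induction_left with
  | one => exact ⟨1, [], one_mem _, ⟨by simp, List.isChain_nil⟩, by simp⟩
  | mul_left x hx y hy ih =>
    rcases hx with hx | hx
    · exact rep_mul_left hEK hx ih
    · obtain ⟨z, l, h1, h2, h3⟩ :=
        rep_mul_left hEK' hx ⟨ih.choose, ih.choose_spec.choose,
          ih.choose_spec.choose_spec.1, alt_comm ih.choose_spec.choose_spec.2.1,
          ih.choose_spec.choose_spec.2.2⟩
      exact ⟨z, l, h1, alt_comm h2, h3⟩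
  | inv_mul_cancel x hx y hy ih =>
    rcases hx with hx | hx
    · exact rep_mul_left hEK (inv_mem hx) ih
    · obtain ⟨z, l, h1, h2, h3⟩ :=
        rep_mul_left hEK' (inv_mem hx) ⟨ih.choose, ih.choose_spec.choose,
          ih.choose_spec.choose_spec.1, alt_comm ih.choose_spec.choose_spec.2.1,
          ih.choose_spec.choose_spec.2.2⟩
      exact ⟨z, l, h1, alt_comm h2, h3⟩

theorem zpowers_tf {z₀ : L} (hz₀ : ¬ IsOfFinOrder z₀) :
    ∀ z ∈ Subgroup.zpowers z₀, IsOfFinOrder z → z = 1 := by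
  intro z hz hfin
  obtain ⟨k, rfl⟩ := Subgroup.mem_zpowers_iff.1 hz
  by_cases hk : k = 0
  · rw [hk, zpow_zero]
  · exfalso
    apply hz₀
    obtain ⟨n, hn, hpow⟩ := isOfFinOrder_iff_pow_eq_one.1 hfin
    refine isOfFinOrder_iff_zpow_eq_one.2 ⟨k * n, ?_, ?_⟩
    · exact mul_ne_zero hk (by exact_mod_cast hn.ne')
    · rw [zpow_mul, zpow_natCast, hpow]

theorem amalgam_conj {E K : Subgroup L} {z₀ : L} (hz₀ : ¬ IsOfFinOrder z₀)
    (hAm : IsAmalgamIn E K (Subgroup.zpowers z₀) ⊤)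
    {x : L} (hxK : x ∈ K) (hxfin : IsOfFinOrder x) (hx1 : x ≠ 1)
    {g : L} (hg : g * x * g⁻¹ ∈ K) : g ∈ K := by
  have hEK := hAm.1
  have htop := hAm.2.1
  have hZtf := zpowers_tf hz₀
  obtain ⟨z, l, hz, hAlt, rfl⟩ := exists_rep hEK htop g
  have hzK : z ∈ K := (hEK ▸ inf_le_right : Subgroup.zpowers z₀ ≤ K) hz
  have hlx : l.prod * x * l.prod⁻¹ ∈ K := by
    have h2 : z⁻¹ * (z * l.prod * x * (z * l.prod)⁻¹) * z ∈ K :=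
      mul_mem (mul_mem (inv_mem hzK) hg) hzK
    have heq : z⁻¹ * (z * l.prod * x * (z * l.prod)⁻¹) * z = l.prod * x * l.prod⁻¹ := by
      group
    rwa [heq] at h2
  exact mul_mem hzK (main_conj hEK hAm hZtf l hAlt x hxK hxfin hx1 hlx)

end Stmt9Aux

/-- Lemma 5.4 -/
theorem stmt9 {L : Type u} [Group L]
    (p : ℕ) (hp : p.Prime) (hp2 : 2 < p)
    (a b c : L) (S : Subgroup L) (hSfin : Finite ↥S) (ha : a ∈ S) (hb : b ∈ S)
    (A N : Subgroup L) (hA : A = Subgroup.zpowers a) (hN : N = S ⊓ Subgroup.normalizer (A : Set L))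
    (hP1 : orderOf a = p)
    (hP2 : b ∉ N)
    (hP3 : b ^ 2 = 1)
    (hP4 : ∀ k ∈ S, k * a = a * k → k * b = b * k → k = 1)
    (hP5 : ∀ f : ↥S →* ↥S,
      Function.Bijective f ∨ (f ⟨a, ha⟩ = 1 ∧ f ⟨b, hb⟩ = 1))
    (hP6 : ∀ x ∈ S, orderOf x ≠ p ^ 2)
    (hP7 : ¬ (p ∣ Nat.card (↥N ⧸ A.subgroupOf N)))
    (hP8 : N ⊓ Subgroup.map (MulAut.conj b).toMonoidHom N = ⊥)
    (hInner : ∀ f : ↥S ≃* ↥S, ∃ s : ↥S, ∀ x, f x = s * x * s⁻¹)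
    (hc : orderOf c = p ^ 2) (hcp : c ^ p = a)
    (M : Subgroup L)
    (hCN : Subgroup.zpowers c ⊓ N = A)
    (hM : M = Subgroup.zpowers c ⊔ N)
    (hMnorm : M ≤ Subgroup.normalizer (Subgroup.zpowers c : Set L))
    (K : Subgroup L) (hK : IsAmalgamIn M S N K)
    (q : ℕ) (hq : q.Prime) (hqS : ¬ (q ∣ Nat.card ↥S))
    (E : Subgroup L) (R : Type u) [Ring R] (iso : Multiplicative R ≃* ↥E)
    (hERing : ∀ f : R →+ R, ∃ r : R, ∀ x, f x = r * x)
    (hTF : ∀ (x : R) (n : ℕ), n ≠ 0 → n • x = 0 → x = 0)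
    (hDiv : ∀ p' : ℕ, p'.Prime → p' ≠ q → ∀ x : R, ∃ y : R, p' • y = x)
    (hInj : ∀ f : R →+ R, f ≠ 0 → Function.Injective f)
    (hone : (↑(iso (Multiplicative.ofAdd (1 : R))) : L) = c * b)
    (hcb : ¬ IsOfFinOrder (c * b))
    (hL : IsAmalgamIn E K (Subgroup.zpowers (c * b)) ⊤) :
    ∀ g : L, Subgroup.map (MulAut.conj g).toMonoidHom A = A → g ∈ K := by
  intro g hgA
  have hSK : S ≤ K := by
    rw [← hK.2.1]
    exact le_sup_right
  have haK : a ∈ K := hSK ha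
  have hafin : IsOfFinOrder a := by
    rw [← orderOf_pos_iff, hP1]
    exact hp.pos
  have ha1 : a ≠ 1 := by
    intro h
    rw [h, orderOf_one] at hP1
    exact hp.ne_one hP1.symm
  have haA : a ∈ A := hA ▸ Subgroup.mem_zpowers a
  have hgag : g * a * g⁻¹ ∈ A := by
    have h2 := Subgroup.mem_map_of_mem (MulAut.conj g).toMonoidHom haA
    rw [hgA] at h2
    simpa using h2
  have hAK : A ≤ K := hA ▸ Subgroup.zpowers_le.2 haK
  exact Stmt9Aux.amalgam_conj hcb hL haK hafin ha1 (hAK hgag)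
end
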